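/- arXiv:0901.3840 — 13 statements merged into one kernel-verified Lean document; each statement's English description precedes it below -/
import Mathlib

section
/- For s > 0 and fixed φ ∈ (0, 2π), the function g(θ) = (1 - cos(φ - θ))^{-s/2} + (1 - cos θ)^{-s/2} is strictly decreasing on the interval (0, φ/2). -/
/-- For `t ∈ (0, 2π)`, `1 - cos t > 0`. -/
lemma one_sub_cos_pos_aux {t : ℝ} (h0 : 0 < t) (h2 : t < 2 * Real.pi) :
    0 < 1 - Real.cos t := by
  have h2t : 2 * (t / 2) = t := by ring
  have hc := Real.cos_two_mul (t / 2)
  rw [h2t] at hc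
  have hsc := Real.sin_sq_add_cos_sq (t / 2)
  have hsin : 0 < Real.sin (t / 2) :=
    Real.sin_pos_of_pos_of_lt_pi (by linarith) (by linarith)
  nlinarith

/-- Ratio lemma: for `0 < a < b < π`, `sin b * (1 - cos a) < sin a * (1 - cos b)`. -/
lemma ratio_aux {a b : ℝ} (ha : 0 < a) (hab : a < b) (hb : b < Real.pi) :
    Real.sin b * (1 - Real.cos a) < Real.sin a * (1 - Real.cos b) := by
  set u := (b - a) / 2 with hu
  set v := (a + b) / 2 with hv
  have hae : a = v - u := by rw [hu, hv]; ring
  have hbe : b = v + u := by rw [hu, hv]; ring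
  have key : Real.sin a * (1 - Real.cos b) - Real.sin b * (1 - Real.cos a)
      = 2 * Real.sin u * (Real.cos u - Real.cos v) := by
    rw [hae, hbe, Real.sin_sub, Real.sin_add, Real.cos_sub, Real.cos_add]
    linear_combination (2 * Real.sin u * Real.cos u) * Real.sin_sq_add_cos_sq v
  have hu0 : 0 < u := by rw [hu]; linarith
  have huv : u < v := by rw [hu, hv]; linarith
  have hvπ : v ≤ Real.pi := by rw [hv]; linarith
  have hsinu : 0 < Real.sin u := Real.sin_pos_of_pos_of_lt_pi hu0 (by linarith)
  have hcos : Real.cos v < Real.cos u :=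
    Real.cos_lt_cos_of_nonneg_of_le_pi hu0.le hvπ huv
  nlinarith

/-- Monotone kernel lemma: for `0 < a < b < 2π` with `a < π`,
`(1 - cos b) ^ q * sin b < (1 - cos a) ^ q * sin a` whenever `q < -1`. -/
lemma kernel_aux {a b q : ℝ} (hq : q < -1) (ha : 0 < a) (haπ : a < Real.pi)
    (hab : a < b) (hb : b < 2 * Real.pi) :
    (1 - Real.cos b) ^ q * Real.sin b < (1 - Real.cos a) ^ q * Real.sin a := by
  have hXa : 0 < 1 - Real.cos a := one_sub_cos_pos_aux ha (by linarith [Real.pi_pos])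
  have hXb : 0 < 1 - Real.cos b := one_sub_cos_pos_aux (ha.trans hab) hb
  have hsina : 0 < Real.sin a := Real.sin_pos_of_pos_of_lt_pi ha haπ
  have hpa : 0 < (1 - Real.cos a) ^ q := Real.rpow_pos_of_pos hXa q
  have hpb : 0 < (1 - Real.cos b) ^ q := Real.rpow_pos_of_pos hXb q
  rcases le_or_gt Real.pi b with hπb | hbπ
  · -- sin b ≤ 0 case
    have hsinb : Real.sin b ≤ 0 := by
      have : Real.sin (b - Real.pi) ≥ 0 :=
        Real.sin_nonneg_of_nonneg_of_le_pi (by linarith) (by linarith)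
      have hsb : Real.sin b = -Real.sin (b - Real.pi) := by
        rw [Real.sin_sub, Real.sin_pi, Real.cos_pi]; ring
      rw [hsb]; linarith
    calc (1 - Real.cos b) ^ q * Real.sin b ≤ 0 :=
          mul_nonpos_of_nonneg_of_nonpos hpb.le hsinb
      _ < (1 - Real.cos a) ^ q * Real.sin a := mul_pos hpa hsina
  · -- both in (0, π)
    have hsinb : 0 < Real.sin b := Real.sin_pos_of_pos_of_lt_pi (ha.trans hab) hbπ
    have hXab : 1 - Real.cos a < 1 - Real.cos b := by
      have := Real.cos_lt_cos_of_nonneg_of_le_pi ha.le hbπ.le hab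
      linarith
    -- write X^q * sin t = X^(q+1) * (sin t / X)
    have hrw : ∀ t : ℝ, 0 < 1 - Real.cos t →
        (1 - Real.cos t) ^ q * Real.sin t
          = (1 - Real.cos t) ^ (q + 1) * (Real.sin t / (1 - Real.cos t)) := by
      intro t ht
      rw [Real.rpow_add ht, Real.rpow_one]
      field_simp
    rw [hrw a hXa, hrw b hXb]
    have h1 : (1 - Real.cos b) ^ (q + 1) < (1 - Real.cos a) ^ (q + 1) :=
      Real.rpow_lt_rpow_of_neg hXa hXab (by linarith)
    have h2 : Real.sin b / (1 - Real.cos b) < Real.sin a / (1 - Real.cos a) := by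
      rw [div_lt_div_iff₀ hXb hXa]
      exact ratio_aux ha hab hbπ
    have h2pos : 0 < Real.sin b / (1 - Real.cos b) := div_pos hsinb hXb
    exact mul_lt_mul'' h1 h2 (Real.rpow_pos_of_pos hXb _).le h2pos.le

/-- For `s > 0` and fixed `φ ∈ (0, 2π)`, the function
`g θ = (1 - cos (φ - θ))^(-s/2) + (1 - cos θ)^(-s/2)` is strictly decreasing on `(0, φ/2)`. -/
theorem greedy_two_point_potential_strictAntiOn (s φ : ℝ) (hs : 0 < s)
    (hφ : φ ∈ Set.Ioo (0 : ℝ) (2 * Real.pi)) :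
    StrictAntiOn (fun θ : ℝ =>
      (1 - Real.cos (φ - θ)) ^ (-(s / 2)) + (1 - Real.cos θ) ^ (-(s / 2)))
      (Set.Ioo 0 (φ / 2)) := by
  obtain ⟨hφ0, hφ2π⟩ := hφ
  have hπ := Real.pi_pos
  set p : ℝ := -(s / 2) with hp
  have hp0 : p < 0 := by rw [hp]; linarith
  -- derivative of F t = (1 - cos t) ^ p
  have hF : ∀ t : ℝ, 0 < 1 - Real.cos t →
      HasDerivAt (fun t : ℝ => (1 - Real.cos t) ^ p)
        ((p * (1 - Real.cos t) ^ (p - 1)) * Real.sin t) t := by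
    intro t ht
    have h1 : HasDerivAt (fun t : ℝ => 1 - Real.cos t) (Real.sin t) t := by
      simpa using (Real.hasDerivAt_cos t).const_sub 1
    exact (Real.hasDerivAt_rpow_const (Or.inl ht.ne')).comp t h1
  -- positivity facts for θ in the interval
  have hderiv : ∀ θ ∈ Set.Ioo (0 : ℝ) (φ / 2),
      HasDerivAt (fun θ : ℝ =>
        (1 - Real.cos (φ - θ)) ^ p + (1 - Real.cos θ) ^ p)
        ((p * (1 - Real.cos (φ - θ)) ^ (p - 1)) * Real.sin (φ - θ) * (-1)
          + (p * (1 - Real.cos θ) ^ (p - 1)) * Real.sin θ) θ := by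
    intro θ hθ
    obtain ⟨hθ0, hθφ⟩ := hθ
    have hXa : 0 < 1 - Real.cos θ := one_sub_cos_pos_aux hθ0 (by linarith)
    have hXb : 0 < 1 - Real.cos (φ - θ) := one_sub_cos_pos_aux (by linarith) (by linarith)
    have hsub : HasDerivAt (fun θ : ℝ => φ - θ) (-1) θ := by
      simpa using (hasDerivAt_id θ).const_sub φ
    exact ((hF (φ - θ) hXb).comp θ hsub).add (hF θ hXa)
  have hconv : Convex ℝ (Set.Ioo (0 : ℝ) (φ / 2)) := convex_Ioo _ _
  have hcont : ContinuousOn (fun θ : ℝ =>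
      (1 - Real.cos (φ - θ)) ^ p + (1 - Real.cos θ) ^ p) (Set.Ioo 0 (φ / 2)) :=
    fun θ hθ => ((hderiv θ hθ).continuousAt).continuousWithinAt
  have := strictAntiOn_of_deriv_neg hconv hcont ?_
  · exact this
  · intro θ hθ
    rw [interior_Ioo] at hθ
    obtain ⟨hθ0, hθφ⟩ := hθ
    rw [(hderiv θ ⟨hθ0, hθφ⟩).deriv]
    -- Main inequality
    have hkey : (1 - Real.cos (φ - θ)) ^ (p - 1) * Real.sin (φ - θ)
        < (1 - Real.cos θ) ^ (p - 1) * Real.sin θ := by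
      apply kernel_aux (by linarith) hθ0 (by linarith) (by linarith) (by linarith)
    nlinarith [hkey, hp0]
end

section
/- For β > 1, the function x ↦ sin(x)/(1 - cos x)^β is strictly decreasing on (0, 2π). -/
/-- For `β > 1`, the function `x ↦ sin x / (1 - cos x)^β` is strictly decreasing on `(0, 2π)`. -/
theorem sin_div_one_sub_cos_rpow_strictAntiOn (β : ℝ) (hβ : 1 < β) :
    StrictAntiOn (fun x : ℝ => Real.sin x / (1 - Real.cos x) ^ β)
      (Set.Ioo 0 (2 * Real.pi)) := by
  have hcos : ∀ x ∈ Set.Ioo 0 (2 * Real.pi), 0 < 1 - Real.cos x := by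
    intro x hx
    have h1 : Real.cos x ≤ 1 := Real.cos_le_one x
    have h2 : Real.cos x ≠ 1 := by
      intro h
      have := (Real.cos_eq_one_iff_of_lt_of_lt (by linarith [hx.1, Real.two_pi_pos]) hx.2).mp h
      linarith [hx.1]
    have := lt_of_le_of_ne h1 h2
    linarith
  apply strictAntiOn_of_deriv_neg (convex_Ioo _ _)
  · apply ContinuousOn.div Real.continuous_sin.continuousOn
    · exact (continuous_const.sub Real.continuous_cos).continuousOn.rpow_const
        (fun x hx => Or.inl (ne_of_gt (hcos x hx)))
    · intro x hx
      exact ne_of_gt (Real.rpow_pos_of_pos (hcos x hx) β)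
  · intro x hx
    rw [interior_Ioo] at hx
    have hg : 0 < 1 - Real.cos x := hcos x hx
    have hd : HasDerivAt (fun x : ℝ => (1 - Real.cos x) ^ β)
        (Real.sin x * β * (1 - Real.cos x) ^ (β - 1)) x := by
      have h1 : HasDerivAt (fun x : ℝ => 1 - Real.cos x) (Real.sin x) x := by
        exact ((hasDerivAt_const x (1:ℝ)).sub (Real.hasDerivAt_cos x)).congr_deriv (by simp)
      exact h1.rpow_const (Or.inl (ne_of_gt hg))
    have hf : HasDerivAt (fun x : ℝ => Real.sin x / (1 - Real.cos x) ^ β)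
        ((Real.cos x * (1 - Real.cos x) ^ β -
          Real.sin x * (Real.sin x * β * (1 - Real.cos x) ^ (β - 1))) /
          ((1 - Real.cos x) ^ β) ^ 2) x :=
      (Real.hasDerivAt_sin x).div hd (ne_of_gt (Real.rpow_pos_of_pos hg β))
    rw [hf.deriv]
    apply div_neg_of_neg_of_pos
    · have hA : 0 < (1 - Real.cos x) ^ (β - 1) := Real.rpow_pos_of_pos hg _
      have hsplit : (1 - Real.cos x) ^ β =
          (1 - Real.cos x) ^ (β - 1) * (1 - Real.cos x) := by
        rw [← Real.rpow_add_one (ne_of_gt hg)]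
        ring_nf
      rw [hsplit]
      have hpyth := Real.sin_sq_add_cos_sq x
      have hc1 : -1 ≤ Real.cos x := Real.neg_one_le_cos x
      nlinarith [mul_pos hA hg, sq_nonneg (Real.sin x), mul_pos (mul_pos hA hg) (sub_pos.mpr hβ)]
    · positivity
end

section
/- Let f(s) = (1/2)(4/3)^{1+s} + (1/3)^{1+s}. Then f(s) < 1 for all s ∈ (0,1), f(1) = 1, and f(s) > 1 for all s > 1. -/
/-- For `f s = (1/2)(4/3)^(1+s) + (1/3)^(1+s)` one has `f s < 1` on `(0,1)`,
`f 1 = 1`, and `f s > 1` for `s > 1`. -/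
theorem f_ratio_trichotomy :
    (∀ s : ℝ, s ∈ Set.Ioo (0 : ℝ) 1 →
      (1 / 2) * ((4 / 3 : ℝ) ^ (1 + s)) + (1 / 3 : ℝ) ^ (1 + s) < 1) ∧
    ((1 / 2) * ((4 / 3 : ℝ) ^ ((1 : ℝ) + 1)) + (1 / 3 : ℝ) ^ ((1 : ℝ) + 1) = 1) ∧
    (∀ s : ℝ, 1 < s →
      1 < (1 / 2) * ((4 / 3 : ℝ) ^ (1 + s)) + (1 / 3 : ℝ) ^ (1 + s)) := by
  have h43 : (0 : ℝ) < 4 / 3 := by norm_num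
  have h13 : (0 : ℝ) < 1 / 3 := by norm_num
  have key : ∀ s : ℝ, (1 / 2) * ((4 / 3 : ℝ) ^ (1 + s)) + (1 / 3 : ℝ) ^ (1 + s)
      = (2 / 3) * ((4 / 3 : ℝ) ^ s) + (1 / 3) * ((1 / 3 : ℝ) ^ s) := by
    intro s
    rw [Real.rpow_add h43, Real.rpow_add h13, Real.rpow_one, Real.rpow_one]
    ring
  refine ⟨?_, ?_, ?_⟩
  · intro s hs
    rw [key]
    have hc := (Real.strictConcaveOn_rpow hs.1 hs.2).2
      (show (4/3:ℝ) ∈ Set.Ici 0 by norm_num) (show (1/3:ℝ) ∈ Set.Ici 0 by norm_num)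
      (by norm_num) (show (0:ℝ) < 2/3 by norm_num) (show (0:ℝ) < 1/3 by norm_num)
      (by norm_num)
    simp only [smul_eq_mul] at hc
    calc (2 / 3) * ((4 / 3 : ℝ) ^ s) + (1 / 3) * ((1 / 3 : ℝ) ^ s)
        < ((2 / 3 : ℝ) * (4 / 3) + (1 / 3) * (1 / 3)) ^ s := hc
      _ = 1 := by norm_num
  · rw [show ((1:ℝ) + 1) = ((2:ℕ):ℝ) by norm_num, Real.rpow_natCast, Real.rpow_natCast]
    norm_num
  · intro s hs
    rw [key]
    have hc := (strictConvexOn_rpow hs).2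
      (show (4/3:ℝ) ∈ Set.Ici 0 by norm_num) (show (1/3:ℝ) ∈ Set.Ici 0 by norm_num)
      (by norm_num) (show (0:ℝ) < 2/3 by norm_num) (show (0:ℝ) < 1/3 by norm_num)
      (by norm_num)
    simp only [smul_eq_mul] at hc
    calc (1 : ℝ) = ((2 / 3 : ℝ) * (4 / 3) + (1 / 3) * (1 / 3)) ^ s := by norm_num
      _ < (2 / 3) * ((4 / 3 : ℝ) ^ s) + (1 / 3) * ((1 / 3 : ℝ) ^ s) := hc
end

section
/- Let S_{2^{n+2}} ⊂ S¹ be a set of 2^{n+2} equally spaced points on the unit circle and S_{2^n} ⊂ S_{2^{n+2}} a subset of 2^n equally spaced points. Then for s > 0, the Riesz s-energy of the difference set α = S_{2^{n+2}} \ S_{2^n} (which has 3·2^n points) satisfies E_s(α) = (1/2)·E_s(S_{2^{n+2}}) + E_s(S_{2^n}). -/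
open Complex

open scoped Classical in
/-- The discrete Riesz `s`-energy of a finite configuration in the plane. -/
noncomputable def rieszEnergy (s : ℝ) (ω : Finset ℂ) : ℝ :=
  ∑ x ∈ ω, ∑ y ∈ ω, if x = y then 0 else ‖x - y‖ ^ (-s)

namespace RieszAux

open scoped Classical

/-- The interaction kernel. -/
noncomputable def ker (s : ℝ) (x y : ℂ) : ℝ := if x = y then 0 else ‖x - y‖ ^ (-s)

lemma ker_symm (s : ℝ) (x y : ℂ) : ker s x y = ker s y x := by
  unfold ker
  rcases eq_or_ne x y with h | h
  · rw [h]
  · rw [if_neg h, if_neg (Ne.symm h), norm_sub_rev]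

lemma rieszEnergy_eq (s : ℝ) (ω : Finset ℂ) :
    rieszEnergy s ω = ∑ x ∈ ω, ∑ y ∈ ω, ker s x y := rfl

/-- the point configuration map -/
noncomputable def f (θ : ℝ) (N : ℕ) (k : ℕ) : ℂ :=
  Complex.exp ((θ + 2 * Real.pi * k / (N : ℕ)) * Complex.I)

lemma f_period (θ : ℝ) (N : ℕ) (hN : 0 < N) (k : ℕ) : f θ N (k + N) = f θ N k := by
  have hN' : (N : ℂ) ≠ 0 := by exact_mod_cast hN.ne'
  unfold f
  have : ((θ : ℂ) + 2 * Real.pi * (↑(k + N)) / N) * Complex.I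
      = ((θ : ℂ) + 2 * Real.pi * k / N) * Complex.I + 2 * Real.pi * Complex.I := by
    push_cast
    field_simp
    ring
  rw [this, Complex.exp_add, Complex.exp_two_pi_mul_I, mul_one]

lemma f_add_mul (θ : ℝ) (N : ℕ) (hN : 0 < N) (k q : ℕ) : f θ N (k + N * q) = f θ N k := by
  induction q with
  | zero => simp
  | succ q ih =>
    have : k + N * (q + 1) = (k + N * q) + N := by ring
    rw [this, f_period θ N hN, ih]

lemma f_mod (θ : ℝ) (N : ℕ) (hN : 0 < N) (k : ℕ) : f θ N k = f θ N (k % N) := by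
  conv_lhs => rw [← Nat.mod_add_div k N]
  exact f_add_mul θ N hN (k % N) (k / N)

lemma f_eq_iff (θ : ℝ) (N : ℕ) (hN : 0 < N) (a b : ℕ) :
    f θ N a = f θ N b ↔ a % N = b % N := by
  constructor
  · intro h
    unfold f at h
    rw [Complex.exp_eq_exp_iff_exists_int] at h
    obtain ⟨m, hm⟩ := h
    have hN' : (N : ℂ) ≠ 0 := by exact_mod_cast hN.ne'
    have hπ : (Real.pi : ℂ) ≠ 0 := by exact_mod_cast Real.pi_ne_zero
    have hI : Complex.I ≠ 0 := Complex.I_ne_zero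
    have key : (a : ℂ) = (b : ℂ) + (m : ℂ) * N := by
      field_simp at hm
      have h2πI : (2 * (Real.pi : ℂ) * Complex.I) ≠ 0 := by
        simp [hπ, hI]
      refine mul_right_cancel₀ h2πI ?_
      linear_combination Complex.I * hm
    have keyZ : (a : ℤ) = (b : ℤ) + m * N := by exact_mod_cast key
    have : ((a % N : ℕ) : ℤ) = ((b % N : ℕ) : ℤ) := by
      push_cast
      rw [keyZ]
      simp [Int.add_mul_emod_self_left]
    exact_mod_cast this
  · intro h
    rw [f_mod θ N hN a, f_mod θ N hN b, h]

lemma f_injOn (θ : ℝ) (N : ℕ) (hN : 0 < N) :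
    Set.InjOn (f θ N) (Finset.range N) := by
  intro a ha b hb h
  simp only [Finset.coe_range, Set.mem_Iio] at ha hb
  have := (f_eq_iff θ N hN a b).1 h
  rwa [Nat.mod_eq_of_lt ha, Nat.mod_eq_of_lt hb] at this

lemma image_shift (θ : ℝ) (N : ℕ) (hN : 0 < N) (j : ℕ) :
    (Finset.range N).image (fun k => f θ N (k + j)) = (Finset.range N).image (f θ N) := by
  apply Finset.eq_of_subset_of_card_le
  · intro x hx
    simp only [Finset.mem_image, Finset.mem_range] at hx ⊢
    obtain ⟨k, hk, rfl⟩ := hx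
    exact ⟨(k + j) % N, Nat.mod_lt _ hN, (f_mod θ N hN (k + j)).symm⟩
  · rw [Finset.card_image_of_injOn (f_injOn θ N hN),
      Finset.card_image_of_injOn]
    intro a ha b hb h
    simp only [Finset.coe_range, Set.mem_Iio] at ha hb
    have := (f_eq_iff θ N hN (a + j) (b + j)).1 h
    have h2 : a % N = b % N := Nat.ModEq.add_right_cancel' j this
    rwa [Nat.mod_eq_of_lt ha, Nat.mod_eq_of_lt hb] at h2

lemma rot_f (θ : ℝ) (N : ℕ) (hN : 0 < N) (j k : ℕ) :
    Complex.exp ((2 * Real.pi * j / N : ℝ) * Complex.I) * f θ N k = f θ N (k + j) := by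
  unfold f
  rw [← Complex.exp_add]
  congr 1
  have hN' : (N : ℂ) ≠ 0 := by exact_mod_cast hN.ne'
  push_cast
  field_simp
  ring

lemma pot_rot (s : ℝ) (c : ℂ) (hc : ‖c‖ = 1) (A : Finset ℂ)
    (hA : A.image (fun z => c * z) = A) (b : ℂ) :
    ∑ y ∈ A, ker s (c * b) y = ∑ y ∈ A, ker s b y := by
  have hc0 : c ≠ 0 := by
    intro h; rw [h] at hc; simp at hc
  conv_lhs => rw [← hA]
  rw [Finset.sum_image (fun x _ y _ h => mul_left_cancel₀ hc0 h)]
  apply Finset.sum_congr rfl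
  intro y _
  unfold ker
  have h1 : (c * b = c * y) ↔ (b = y) := mul_right_inj' hc0
  have h2 : ‖c * b - c * y‖ = ‖b - y‖ := by
    rw [← mul_sub, norm_mul, hc, one_mul]
  simp only [h1, h2]

lemma A_invariant (θ : ℝ) (N : ℕ) (hN : 0 < N) (j : ℕ) :
    ((Finset.range N).image (f θ N)).image
      (fun z => Complex.exp ((2 * Real.pi * j / N : ℝ) * Complex.I) * z)
      = (Finset.range N).image (f θ N) := by
  rw [Finset.image_image]
  have : (fun z => Complex.exp ((2 * Real.pi * j / N : ℝ) * Complex.I) * z) ∘ f θ N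
      = fun k => f θ N (k + j) := by
    funext k
    simp only [Function.comp_apply]
    exact rot_f θ N hN j k
  rw [this, image_shift θ N hN j]

lemma pot_const (s θ : ℝ) (N : ℕ) (hN : 0 < N) (a : ℂ)
    (ha : a ∈ (Finset.range N).image (f θ N)) :
    ∑ y ∈ (Finset.range N).image (f θ N), ker s a y
      = ∑ y ∈ (Finset.range N).image (f θ N), ker s (f θ N 0) y := by
  simp only [Finset.mem_image, Finset.mem_range] at ha
  obtain ⟨j, hj, rfl⟩ := ha
  have hfj : f θ N j = Complex.exp ((2 * Real.pi * j / N : ℝ) * Complex.I) * f θ N 0 := by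
    rw [rot_f θ N hN j 0, Nat.zero_add]
  rw [hfj]
  exact pot_rot s _ (Complex.norm_exp_ofReal_mul_I _) _ (A_invariant θ N hN j) _

lemma energy_eq_pot (s θ : ℝ) (N : ℕ) (hN : 0 < N) :
    rieszEnergy s ((Finset.range N).image (f θ N))
      = N * ∑ y ∈ (Finset.range N).image (f θ N), ker s (f θ N 0) y := by
  rw [rieszEnergy_eq,
    Finset.sum_congr rfl (fun a ha => pot_const s θ N hN a ha),
    Finset.sum_const, Finset.card_image_of_injOn (f_injOn θ N hN),
    Finset.card_range, nsmul_eq_mul]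

lemma energy_split (s : ℝ) (A B : Finset ℂ) (h : B ⊆ A) :
    rieszEnergy s A = rieszEnergy s (A \ B) + rieszEnergy s B
      + 2 * ∑ x ∈ A \ B, ∑ y ∈ B, ker s x y := by
  have hd : Disjoint (A \ B) B := Finset.sdiff_disjoint
  have hu : (A \ B) ∪ B = A := Finset.sdiff_union_of_subset h
  have hswap : ∑ x ∈ B, ∑ y ∈ A \ B, ker s x y = ∑ x ∈ A \ B, ∑ y ∈ B, ker s x y := by
    rw [Finset.sum_comm]
    exact Finset.sum_congr rfl fun x _ => Finset.sum_congr rfl fun y _ => ker_symm s y x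
  have hA' : rieszEnergy s A = ∑ x ∈ (A \ B) ∪ B, ∑ y ∈ (A \ B) ∪ B, ker s x y := by
    rw [hu, rieszEnergy_eq]
  rw [hA', Finset.sum_union hd]
  simp only [Finset.sum_union hd]
  rw [Finset.sum_add_distrib, Finset.sum_add_distrib, hswap,
    rieszEnergy_eq s (A \ B), rieszEnergy_eq s B]
  ring

end RieszAux

open RieszAux in
open scoped Classical in
/-- If `S_{2^{n+2}}` consists of `2^(n+2)` equally spaced points on the unit circle and
`S_{2^n} ⊆ S_{2^{n+2}}` consists of `2^n` equally spaced points, then for `s > 0` the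
Riesz `s`-energy of the difference set `α = S_{2^{n+2}} \ S_{2^n}` (of `3·2^n` points)
satisfies `E_s(α) = (1/2)·E_s(S_{2^{n+2}}) + E_s(S_{2^n})`. -/
theorem riesz_energy_greedy_difference (s : ℝ) (hs : 0 < s) (n : ℕ) (θ : ℝ) (r : ℕ)
    (hr : r < 4) :
    rieszEnergy s
        ((Finset.range (2 ^ (n + 2))).image
            (fun k => Complex.exp ((θ + 2 * Real.pi * k / (2 ^ (n + 2) : ℕ)) * Complex.I)) \
          (Finset.range (2 ^ n)).image
            (fun k => Complex.exp
              ((θ + 2 * Real.pi * (4 * k + r) / (2 ^ (n + 2) : ℕ)) * Complex.I))) =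
      (1 / 2) * rieszEnergy s
          ((Finset.range (2 ^ (n + 2))).image
            (fun k => Complex.exp ((θ + 2 * Real.pi * k / (2 ^ (n + 2) : ℕ)) * Complex.I))) +
        rieszEnergy s
          ((Finset.range (2 ^ n)).image
            (fun k => Complex.exp
              ((θ + 2 * Real.pi * (4 * k + r) / (2 ^ (n + 2) : ℕ)) * Complex.I))) := by
  set N : ℕ := 2 ^ (n + 2) with hNdef
  have hN : 0 < N := Nat.pow_pos (by norm_num)
  have hco : ∀ M : ℕ, ((do
      let a ← Finset.range M
      pure ((a : ℕ) : ℂ)) : Finset ℂ) = (Finset.range M).image (Nat.cast) :=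
    fun M => by ext; simp
  simp only [hco, Finset.image_image, Function.comp_def]
  have hAfun : (fun k : ℕ => Complex.exp
      ((θ + 2 * Real.pi * ((k : ℕ) : ℂ) / ((N : ℕ) : ℂ)) * Complex.I)) = f θ N := rfl
  have hBfun : (fun k : ℕ => Complex.exp
      ((θ + 2 * Real.pi * (4 * ((k : ℕ) : ℂ) + (r : ℂ)) / ((N : ℕ) : ℂ)) * Complex.I))
      = fun k : ℕ => f θ N (4 * k + r) := by
    funext k
    unfold f
    push_cast
    ring_nf
  rw [hAfun, hBfun]
  set A := (Finset.range N).image (f θ N) with hA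
  set B := (Finset.range (2 ^ n)).image (fun k : ℕ => f θ N (4 * k + r)) with hB
  -- basic facts
  have hlt : ∀ k : ℕ, k < 2 ^ n → 4 * k + r < N := by
    intro k hk
    have : 4 * k + r < 4 * 2 ^ n := by omega
    calc 4 * k + r < 4 * 2 ^ n := this
    _ = N := by rw [hNdef]; ring
  have hBsub : B ⊆ A := by
    intro x hx
    simp only [hB, Finset.mem_image, Finset.mem_range] at hx
    obtain ⟨k, hk, rfl⟩ := hx
    simp only [hA, Finset.mem_image, Finset.mem_range]
    exact ⟨4 * k + r, hlt k hk, rfl⟩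
  have hBcard : B.card = 2 ^ n := by
    rw [hB, Finset.card_image_of_injOn, Finset.card_range]
    intro a ha b hb h
    simp only [Finset.coe_range, Set.mem_Iio] at ha hb
    have h2 := (f_eq_iff θ N hN _ _).1 h
    rw [Nat.mod_eq_of_lt (hlt a ha), Nat.mod_eq_of_lt (hlt b hb)] at h2
    omega
  set P : ℝ := ∑ y ∈ A, ker s (f θ N 0) y with hP
  have hEA : rieszEnergy s A = N * P := energy_eq_pot s θ N hN
  -- cross sum over B × A equals |B| * P
  have hcross : ∑ b ∈ B, ∑ a ∈ A, ker s b a = (2 ^ n : ℕ) * P := by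
    rw [Finset.sum_congr rfl (fun b hb => pot_const s θ N hN b (hBsub hb)),
      Finset.sum_const, hBcard, nsmul_eq_mul]
  -- split the inner sum
  have hsplitA : ∀ b : ℂ, ∑ a ∈ A, ker s b a
      = ∑ a ∈ B, ker s b a + ∑ a ∈ A \ B, ker s b a := by
    intro b
    rw [← Finset.sum_union (Finset.disjoint_sdiff), Finset.union_sdiff_of_subset hBsub]
  have hcross2 : ∑ b ∈ B, ∑ a ∈ A, ker s b a
      = rieszEnergy s B + ∑ x ∈ A \ B, ∑ y ∈ B, ker s x y := by
    rw [Finset.sum_congr rfl (fun b _ => hsplitA b), Finset.sum_add_distrib,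
      rieszEnergy_eq s B]
    congr 1
    rw [Finset.sum_comm]
    exact Finset.sum_congr rfl fun x _ => Finset.sum_congr rfl fun y _ => ker_symm s y x
  have hsplit := energy_split s A B hBsub
  have hNval : (N : ℝ) = 4 * (2 ^ n : ℕ) := by
    rw [hNdef]; push_cast; ring
  have hC : ∑ x ∈ A \ B, ∑ y ∈ B, ker s x y = (2 ^ n : ℕ) * P - rieszEnergy s B := by
    have := hcross.symm.trans hcross2
    linarith
  rw [hsplit] at hEA ⊢ <;> try skip
  -- now hEA : E(A\B) + E(B) + 2C = N*P ; goal in terms of split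
  have : rieszEnergy s (A \ B) = (N : ℝ) * P - rieszEnergy s B
      - 2 * ((2 ^ n : ℕ) * P - rieszEnergy s B) := by
    rw [← hC]; linarith [hEA]
  rw [hNval] at this
  rw [hNval] at hEA
  -- goal after rw [hsplit]: E(A\B) = 1/2 * (E(A\B)+E(B)+2C) + E(B)
  rw [hC]
  linarith [this]
end

section
/- For any symmetric kernel k on a compact set A with finite Wiener energy w(A), and any equilibrium measure μ, if (a_n) is a greedy (k,μ)-energy sequence then for all N ≥ 2 the discrete energy satisfies E(α_N) = Σ_{i≠j≤N} k(a_i, a_j) ≤ N(N-1)·w(A). -/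
open MeasureTheory

/-- For a symmetric lower semicontinuous kernel `k` on a compact set `A` in a locally
compact Hausdorff space, with finite Wiener energy `w(A)` attained by an equilibrium
measure `μ`, any greedy `(k,μ)`-energy sequence `a` (points chosen in the essential
support `S*_μ = {x ∈ A : U^μ(x) ≤ w(A)}`, each minimizing the discrete potential there)
satisfies `E(α_N) = ∑_{i≠j<N} k(a_i,a_j) ≤ N(N-1)·w(A)` for all `N ≥ 2`. -/
theorem greedy_energy_le_wiener
    {X : Type*} [TopologicalSpace X] [LocallyCompactSpace X] [T2Space X]
    [MeasurableSpace X] [BorelSpace X]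
    (A : Set X) (hA : IsCompact A)
    (k : X → X → ℝ) (hsym : ∀ x y, k x y = k y x)
    (hlsc : LowerSemicontinuous fun p : X × X => k p.1 p.2)
    (μ : Measure X) [IsProbabilityMeasure μ] (hμA : μ Aᶜ = 0)
    (wA : ℝ)
    (heq : ∫ x, ∫ y, k x y ∂μ ∂μ = wA)
    (hmin : ∀ ν : Measure X, IsProbabilityMeasure ν → ν Aᶜ = 0 →
      wA ≤ ∫ x, ∫ y, k x y ∂ν ∂ν)
    (hFuglede : μ {x ∈ A | ∫ y, k x y ∂μ ≤ wA} = 1)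
    (a : ℕ → X)
    (ha : ∀ n, a n ∈ {x ∈ A | ∫ y, k x y ∂μ ≤ wA})
    (hgreedy : ∀ n, ∀ x ∈ {x ∈ A | ∫ y, k x y ∂μ ≤ wA},
      ∑ i ∈ Finset.range n, k (a n) (a i) ≤ ∑ i ∈ Finset.range n, k x (a i))
    (hint : ∀ i, Integrable (fun x => k x (a i)) μ)
    (N : ℕ) (hN : 2 ≤ N) :
    ∑ i ∈ Finset.range N, ∑ j ∈ Finset.range N, (if i = j then 0 else k (a i) (a j)) ≤
      (N : ℝ) * ((N : ℝ) - 1) * wA := by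
  -- each slice of k is lower semicontinuous, hence measurable
  have hslice : ∀ z : X, LowerSemicontinuous fun x => k x z := by
    intro z
    have : LowerSemicontinuous ((fun p : X × X => k p.1 p.2) ∘ fun x => (x, z)) :=
      LowerSemicontinuous.comp hlsc (continuous_id.prodMk continuous_const)
    exact this
  -- key lemma: the greedy value at step n is at most n * wA
  have key : ∀ n, ∑ i ∈ Finset.range n, k (a n) (a i) ≤ (n : ℝ) * wA := by
    intro n
    set S := {x ∈ A | ∫ y, k x y ∂μ ≤ wA} with hS
    set f : X → ℝ := fun x => ∑ i ∈ Finset.range n, k x (a i) with hf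
    have hflsc : LowerSemicontinuous f := by
      apply lowerSemicontinuous_sum
      intro i _
      exact hslice (a i)
    have hfmeas : Measurable f := hflsc.measurable
    have hfint : Integrable f μ := integrable_finset_sum _ fun i _ => hint i
    set c := ∑ i ∈ Finset.range n, k (a n) (a i) with hc
    have hae : ∀ᵐ x ∂μ, c ≤ f x := by
      have hms : MeasurableSet {x | c ≤ f x} := measurableSet_le measurable_const hfmeas
      have h1 : μ {x | c ≤ f x} = 1 := by
        refine le_antisymm (prob_le_one) ?_
        calc (1 : ENNReal) = μ S := hFuglede.symm
          _ ≤ μ {x | c ≤ f x} := measure_mono fun x hx => hgreedy n x hx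
      have h0 : μ {x | c ≤ f x}ᶜ = 0 := (prob_compl_eq_zero_iff hms).2 h1
      filter_upwards [measure_eq_zero_iff_ae_notMem.mp h0] with x hx
      simpa using hx
    calc c = ∫ _, c ∂μ := by simp
      _ ≤ ∫ x, f x ∂μ := integral_mono_ae (integrable_const c) hfint hae
      _ = ∑ i ∈ Finset.range n, ∫ x, k x (a i) ∂μ :=
          integral_finset_sum _ fun i _ => hint i
      _ = ∑ i ∈ Finset.range n, ∫ y, k (a i) y ∂μ := by
          refine Finset.sum_congr rfl fun i _ => ?_
          congr 1; ext x; exact hsym x (a i)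
      _ ≤ ∑ i ∈ Finset.range n, wA := Finset.sum_le_sum fun i _ => (ha i).2
      _ = (n : ℝ) * wA := by simp [mul_comm]
  -- main estimate by induction
  have main : ∀ M : ℕ,
      ∑ i ∈ Finset.range M, ∑ j ∈ Finset.range M, (if i = j then 0 else k (a i) (a j)) ≤
        (M : ℝ) * ((M : ℝ) - 1) * wA := by
    intro M
    induction M with
    | zero => simp
    | succ n ih =>
      have expand :
          ∑ i ∈ Finset.range (n+1), ∑ j ∈ Finset.range (n+1),
              (if i = j then 0 else k (a i) (a j)) =
            (∑ i ∈ Finset.range n, ∑ j ∈ Finset.range n,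
              (if i = j then 0 else k (a i) (a j)))
            + ∑ i ∈ Finset.range n, k (a n) (a i)
            + ∑ j ∈ Finset.range n, k (a n) (a j) := by
        rw [Finset.sum_range_succ]
        have h1 : ∀ i ∈ Finset.range n,
            ∑ j ∈ Finset.range (n+1), (if i = j then 0 else k (a i) (a j)) =
              (∑ j ∈ Finset.range n, (if i = j then 0 else k (a i) (a j)))
                + k (a n) (a i) := by
          intro i hi
          rw [Finset.sum_range_succ, if_neg (Finset.mem_range.mp hi).ne, hsym]
        rw [Finset.sum_congr rfl h1, Finset.sum_add_distrib]
        have h2 : ∑ j ∈ Finset.range (n+1), (if n = j then 0 else k (a n) (a j)) =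
            ∑ j ∈ Finset.range n, k (a n) (a j) := by
          rw [Finset.sum_range_succ, if_pos rfl, add_zero]
          exact Finset.sum_congr rfl fun j hj => if_neg (Finset.mem_range.mp hj).ne'
        rw [h2]
        try ring
      rw [expand]
      have hk := key n
      have : ((n : ℝ) + 1) * (((n : ℝ) + 1) - 1) * wA
          = (n : ℝ) * ((n : ℝ) - 1) * wA + (n : ℝ) * wA + (n : ℝ) * wA := by ring
      push_cast
      rw [this]
      linarith [ih, hk]
  exact main N
end

section
/- Define the sequence (a_n)_{n≥0} in [0,1] by a_0 = 1, a_1 = 0, a_2 = 1/2, and a_{2^n + i} = (2i - 1)/2^{n+1} for 1 ≤ i ≤ 2^n, n ≥ 1. Then the number of indices 0 ≤ k ≤ 3·2^{n-1} with a_k ∈ [0, 1/2] equals 2^n + 1, and consequently lim_{n→∞} card{k ≤ 3·2^{n-1} : a_k ∈ [0,1/2]}/(3·2^{n-1} + 1) = 2/3 ≠ 1/2. -/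
open Filter

/-- The greedy best-packing (Leja–Bos) sequence on `[0,1]` given by `a 0 = 1`, `a 1 = 0`,
`a 2 = 1/2`, `a (2^n + i) = (2i-1)/2^(n+1)` for `1 ≤ i ≤ 2^n`, `n ≥ 1`, has exactly
`2^n + 1` of its first `3·2^(n-1) + 1` points in `[0, 1/2]`; hence the proportion tends
to `2/3 ≠ 1/2`, so the sequence is not asymptotically uniformly distributed. -/
theorem leja_bos_not_uniform (a : ℕ → ℝ)
    (h0 : a 0 = 1) (h1 : a 1 = 0) (h2 : a 2 = 1 / 2)
    (hrec : ∀ n : ℕ, 1 ≤ n → ∀ i : ℕ, 1 ≤ i → i ≤ 2 ^ n →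
      a (2 ^ n + i) = (2 * (i : ℝ) - 1) / 2 ^ (n + 1)) :
    (∀ n : ℕ, 1 ≤ n →
      {k : ℕ | k ≤ 3 * 2 ^ (n - 1) ∧ a k ∈ Set.Icc (0 : ℝ) (1 / 2)}.ncard = 2 ^ n + 1) ∧
    Tendsto (fun n : ℕ =>
        (({k : ℕ | k ≤ 3 * 2 ^ (n - 1) ∧ a k ∈ Set.Icc (0 : ℝ) (1 / 2)}.ncard : ℝ)) /
          (3 * 2 ^ (n - 1) + 1)) atTop (nhds (2 / 3)) ∧
    (2 / 3 : ℝ) ≠ 1 / 2 := by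
  classical
  -- membership criterion for block points
  have key : ∀ m i : ℕ, 1 ≤ m → 1 ≤ i → i ≤ 2 ^ m →
      (a (2 ^ m + i) ∈ Set.Icc (0:ℝ) (1/2) ↔ 2 * i ≤ 2 ^ m + 1) := by
    intro m i hm hi1 hi2
    rw [hrec m hm i hi1 hi2, Set.mem_Icc]
    have h2p : (0:ℝ) < 2 ^ (m+1) := by positivity
    have hi1' : (1:ℝ) ≤ (i:ℝ) := by exact_mod_cast hi1
    constructor
    · rintro ⟨-, hle⟩
      rw [div_le_div_iff₀ h2p two_pos] at hle
      have : (2 * (i:ℝ)) * 2 ≤ 2 ^ m * 2 + 1 * 2 := by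
        rw [pow_succ] at hle; nlinarith
      have h' : (2 * (i:ℝ)) ≤ 2 ^ m + 1 := by linarith
      exact_mod_cast h'
    · intro hle
      have hle' : (2 * (i:ℝ)) ≤ 2 ^ m + 1 := by exact_mod_cast hle
      constructor
      · apply div_nonneg (by linarith) (le_of_lt h2p)
      · rw [div_le_div_iff₀ h2p two_pos, pow_succ]
        nlinarith
  -- individual small values
  have m0 : a 0 ∉ Set.Icc (0:ℝ) (1/2) := by rw [h0, Set.mem_Icc]; norm_num
  have m1 : a 1 ∈ Set.Icc (0:ℝ) (1/2) := by rw [h1, Set.mem_Icc]; norm_num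
  have m2 : a 2 ∈ Set.Icc (0:ℝ) (1/2) := by rw [h2, Set.mem_Icc]; norm_num
  have m3 : a 3 ∈ Set.Icc (0:ℝ) (1/2) := by
    have := (key 1 1 le_rfl le_rfl (by norm_num)).2 (by norm_num)
    simpa using this
  -- the finset count
  have count : ∀ n : ℕ, 1 ≤ n →
      ((Finset.range (3 * 2 ^ (n - 1) + 1)).filter
        (fun k => a k ∈ Set.Icc (0:ℝ) (1/2))).card = 2 ^ n + 1 := by
    intro n hn
    induction n, hn using Nat.le_induction with
    | base =>
      have h4 : 3 * 2 ^ (1 - 1) + 1 = 4 := by norm_num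
      rw [h4]
      have : (Finset.range 4).filter (fun k => a k ∈ Set.Icc (0:ℝ) (1/2))
          = {1, 2, 3} := by
        ext k
        simp only [Finset.mem_filter, Finset.mem_range, Finset.mem_insert,
          Finset.mem_singleton]
        constructor
        · rintro ⟨hk, hmem⟩
          interval_cases k
          · exact absurd hmem m0
          · left; rfl
          · right; left; rfl
          · right; right; rfl
        · rintro (rfl | rfl | rfl)
          · exact ⟨by norm_num, m1⟩
          · exact ⟨by norm_num, m2⟩
          · exact ⟨by norm_num, m3⟩
      rw [this]; decide
    | succ n hn ih =>
      have hsub : (n + 1) - 1 = n := by omega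
      rw [hsub]
      have hle : 3 * 2 ^ (n-1) + 1 ≤ 3 * 2 ^ n + 1 := by
        have : 2 ^ (n-1) ≤ 2 ^ n := Nat.pow_le_pow_right (by norm_num) (by omega)
        omega
      have hsplit : Finset.range (3 * 2 ^ n + 1)
          = Finset.range (3 * 2 ^ (n-1) + 1)
            ∪ Finset.Ico (3 * 2 ^ (n-1) + 1) (3 * 2 ^ n + 1) := by
        rw [Finset.range_eq_Ico, Finset.range_eq_Ico,
          Finset.Ico_union_Ico_eq_Ico (Nat.zero_le _) hle]
      have hpow : 2 ^ n = 2 * 2 ^ (n - 1) := by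
        conv_lhs => rw [show n = (n-1) + 1 by omega]
        ring
      have hfico : (Finset.Ico (3 * 2 ^ (n-1) + 1) (3 * 2 ^ n + 1)).filter
            (fun k => a k ∈ Set.Icc (0:ℝ) (1/2))
          = Finset.Ico (2 ^ (n+1) + 1) (3 * 2 ^ n + 1) := by
        ext k
        simp only [Finset.mem_filter, Finset.mem_Ico]
        constructor
        · rintro ⟨⟨hk1, hk2⟩, hmem⟩
          refine ⟨?_, hk2⟩
          by_contra hlt
          push_neg at hlt
          -- k ≤ 2^(n+1), so k = 2^n + i with 2^(n-1) < i ≤ 2^n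
          have hkrep : k = 2 ^ n + (k - 2 ^ n) := by
            rw [pow_succ] at hlt; omega
          rw [hkrep] at hmem
          have hi1 : 1 ≤ k - 2 ^ n := by omega
          have hi2 : k - 2 ^ n ≤ 2 ^ n := by rw [pow_succ] at hlt; omega
          have := (key n (k - 2 ^ n) hn hi1 hi2).1 hmem
          omega
        · rintro ⟨hk1, hk2⟩
          have hge : 2 ^ (n-1) * 3 + 1 ≤ 2 ^ (n+1) + 1 := by
            rw [pow_succ, hpow]; omega
          refine ⟨⟨by omega, hk2⟩, ?_⟩
          have hkrep : k = 2 ^ (n+1) + (k - 2 ^ (n+1)) := by omega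
          rw [hkrep]
          have hi1 : 1 ≤ k - 2 ^ (n+1) := by omega
          have hi2 : k - 2 ^ (n+1) ≤ 2 ^ (n+1) := by
            rw [pow_succ]; omega
          rw [key (n+1) (k - 2 ^ (n+1)) (by omega) hi1 hi2]
          rw [pow_succ]; omega
      have hdisj : Disjoint
          ((Finset.range (3 * 2 ^ (n-1) + 1)).filter
            (fun k => a k ∈ Set.Icc (0:ℝ) (1/2)))
          ((Finset.Ico (3 * 2 ^ (n-1) + 1) (3 * 2 ^ n + 1)).filter
            (fun k => a k ∈ Set.Icc (0:ℝ) (1/2))) := by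
        apply Finset.disjoint_filter_filter
        rw [Finset.range_eq_Ico]
        apply Finset.Ico_disjoint_Ico_consecutive
      rw [hsplit, Finset.filter_union, Finset.card_union_of_disjoint hdisj, ih, hfico,
        Nat.card_Ico]
      rw [pow_succ 2 n]
      omega
  -- identify the set with the finset
  have setEq : ∀ n : ℕ,
      {k : ℕ | k ≤ 3 * 2 ^ (n - 1) ∧ a k ∈ Set.Icc (0 : ℝ) (1 / 2)}
        = ↑((Finset.range (3 * 2 ^ (n - 1) + 1)).filter
            (fun k => a k ∈ Set.Icc (0:ℝ) (1/2))) := by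
    intro n
    ext k
    simp [Nat.lt_succ_iff]
  have ncardEq : ∀ n : ℕ, 1 ≤ n →
      {k : ℕ | k ≤ 3 * 2 ^ (n - 1) ∧ a k ∈ Set.Icc (0 : ℝ) (1 / 2)}.ncard
        = 2 ^ n + 1 := by
    intro n hn
    rw [setEq n, Set.ncard_coe_finset, count n hn]
  refine ⟨ncardEq, ?_, by norm_num⟩
  -- the limit
  have hx : Tendsto (fun n : ℕ => ((1:ℝ)/2) ^ (n - 1)) atTop (nhds 0) := by
    exact (tendsto_pow_atTop_nhds_zero_of_lt_one (by norm_num) (by norm_num)).comp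
      (tendsto_sub_atTop_nat 1)
  have hlim : Tendsto (fun n : ℕ => (2 + ((1:ℝ)/2) ^ (n-1)) / (3 + ((1:ℝ)/2) ^ (n-1)))
      atTop (nhds (2/3)) := by
    have h2 : Tendsto (fun n : ℕ => 2 + ((1:ℝ)/2) ^ (n-1)) atTop (nhds 2) := by
      simpa using (tendsto_const_nhds.add hx)
    have h3 : Tendsto (fun n : ℕ => 3 + ((1:ℝ)/2) ^ (n-1)) atTop (nhds 3) := by
      simpa using (tendsto_const_nhds.add hx)
    exact h2.div h3 (by norm_num)
  refine Tendsto.congr' ?_ hlim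
  filter_upwards [eventually_ge_atTop 1] with n hn
  rw [ncardEq n hn]
  obtain ⟨m, rfl⟩ : ∃ m, n = m + 1 := ⟨n - 1, by omega⟩
  simp only [Nat.add_sub_cancel]
  have hp : (0:ℝ) < 2 ^ m := by positivity
  push_cast
  rw [pow_succ]
  field_simp
  have h12 : ((1:ℝ)/2)^m * 2^m = 1 := by rw [← mul_pow]; norm_num
  linear_combination h12
end

section
/- The sequence (a_n) in [0,1] defined by a_0 = 1, a_1 = 0, a_2 = 1/2, and a_{2^n + i} = (2i-1)/2^{n+1} for 1 ≤ i ≤ 2^n, n ≥ 1, is a greedy best-packing sequence: for every m ≥ 1, min_{0≤i≤m-1} |a_m - a_i| = max_{x∈[0,1]} min_{0≤i≤m-1} |x - a_i|. -/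
/-- The sequence `a 0 = 1`, `a 1 = 0`, `a 2 = 1/2`,
`a (2^n + i) = (2i-1)/2^(n+1)` for `1 ≤ i ≤ 2^n`, `n ≥ 1`, is a greedy best-packing
sequence on `[0,1]`: for every `m ≥ 1`, the minimal distance from `a m` to the
previously selected points equals the maximum over `x ∈ [0,1]` of the minimal distance
from `x` to those points. -/
theorem leja_bos_is_greedy_best_packing (a : ℕ → ℝ)
    (h0 : a 0 = 1) (h1 : a 1 = 0) (h2 : a 2 = 1 / 2)
    (hrec : ∀ n : ℕ, 1 ≤ n → ∀ i : ℕ, 1 ≤ i → i ≤ 2 ^ n →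
      a (2 ^ n + i) = (2 * (i : ℝ) - 1) / 2 ^ (n + 1)) :
    ∀ m : ℕ, 1 ≤ m →
      (⨅ i : Fin m, |a m - a i|) =
        ⨆ x : Set.Icc (0 : ℝ) 1, ⨅ i : Fin m, |(x : ℝ) - a i| := by
  -- recursion including n = 0
  have hrec' : ∀ n i : ℕ, 1 ≤ i → i ≤ 2 ^ n →
      a (2 ^ n + i) = (2 * (i : ℝ) - 1) / 2 ^ (n + 1) := by
    intro n i hi1 hi2
    match n with
    | 0 =>
      interval_cases i
      · norm_num [h2]
    | (n+1) => exact hrec (n+1) (by omega) i hi1 hi2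
  -- all grid points k/2^n appear among a_0, ..., a_{2^n}
  have grid : ∀ n : ℕ, ∀ k : ℕ, k ≤ 2 ^ n → ∃ j ≤ 2 ^ n, a j = (k : ℝ) / 2 ^ n := by
    intro n
    induction n with
    | zero =>
      intro k hk
      interval_cases k
      · exact ⟨1, by omega, by simp [h1]⟩
      · exact ⟨0, by omega, by simp [h0]⟩
    | succ n ih =>
      intro k hk
      rcases Nat.even_or_odd k with ⟨k', hk'⟩ | ⟨k', hk'⟩
      · obtain ⟨j, hj, hja⟩ := ih k' (by omega)
        refine ⟨j, by omega, ?_⟩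
        rw [hja, hk']
        push_cast
        rw [pow_succ]
        field_simp
        ring
      · subst hk'
        refine ⟨2 ^ n + (k' + 1), by omega, ?_⟩
        rw [hrec' n (k' + 1) (by omega) (by omega)]
        push_cast
        ring_nf
  -- decomposition of m ≥ 2
  have decomp : ∀ m : ℕ, 2 ≤ m → ∃ n i : ℕ, m = 2 ^ n + i ∧ 1 ≤ i ∧ i ≤ 2 ^ n := by
    intro m hm
    set n := Nat.log 2 (m - 1) with hn
    have ha : 2 ^ n ≤ m - 1 := Nat.pow_log_le_self 2 (by omega)
    have hb : m - 1 < 2 ^ (n + 1) := Nat.lt_pow_succ_log_self (by norm_num) _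
    have hp : (2:ℕ) ^ (n + 1) = 2 * 2 ^ n := by rw [pow_succ]; ring
    exact ⟨n, m - 2 ^ n, by omega, by omega, by omega⟩
  have aval : ∀ j : ℕ, 2 ≤ j → ∃ n i : ℕ, j = 2 ^ n + i ∧ 1 ≤ i ∧ i ≤ 2 ^ n ∧
      a j = (2 * (i : ℝ) - 1) / 2 ^ (n + 1) := by
    intro j hj
    obtain ⟨n, i, h, hi1, hi2⟩ := decomp j hj
    exact ⟨n, i, h, hi1, hi2, by rw [h]; exact hrec' n i hi1 hi2⟩
  -- every prior point is a dyadic q/2^(n+1) with q ≠ 2i-1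
  have key : ∀ n i : ℕ, 1 ≤ i → i ≤ 2 ^ n → ∀ j : ℕ, j < 2 ^ n + i →
      ∃ q : ℤ, a j = (q : ℝ) / 2 ^ (n + 1) ∧ q ≠ 2 * (i : ℤ) - 1 := by
    intro n i hi1 hi2 j hj
    match j with
    | 0 =>
      refine ⟨2 ^ (n + 1), by rw [h0]; push_cast; field_simp, ?_⟩
      have : (2:ℤ) ^ (n + 1) = 2 * 2 ^ n := by rw [pow_succ]; ring
      omega
    | 1 => exact ⟨0, by simp [h1], by omega⟩
    | (j+2) =>
      obtain ⟨n', i', hdec, hi'1, hi'2, hval⟩ := aval (j + 2) (by omega)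
      have hn'le : n' ≤ n := by
        by_contra hc
        have h1' : (2:ℕ) ^ (n + 1) ≤ 2 ^ n' := Nat.pow_le_pow_right (by norm_num) (by omega)
        have h2' : (2:ℕ) ^ (n + 1) = 2 * 2 ^ n := by rw [pow_succ]; ring
        omega
      rcases eq_or_lt_of_le hn'le with heq | hlt
      · subst heq
        refine ⟨2 * (i' : ℤ) - 1, by rw [hval]; push_cast; ring_nf, ?_⟩
        have : i' < i := by omega
        omega
      · refine ⟨(2 * (i' : ℤ) - 1) * 2 ^ (n - n'), ?_, ?_⟩
        · rw [hval]
          have hpw : (2:ℝ) ^ (n + 1) = 2 ^ (n - n') * 2 ^ (n' + 1) := by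
            rw [← pow_add]
            congr 1
            omega
          rw [hpw]
          push_cast
          rw [mul_comm ((2:ℝ) ^ (n - n'))]
          rw [mul_div_mul_right _ _ (by positivity : ((2:ℝ) ^ (n - n') ≠ 0))]
        · have hpw : (2:ℤ) ^ (n - n') = 2 * 2 ^ (n - n' - 1) := by
            rw [← pow_succ']
            congr 1
            omega
          obtain ⟨r, hr⟩ : ∃ r : ℤ, (2 * (i' : ℤ) - 1) * 2 ^ (n - n') = 2 * r :=
            ⟨(2 * (i' : ℤ) - 1) * 2 ^ (n - n' - 1), by rw [hpw]; ring⟩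
          rw [hr]
          omega
  -- main argument
  intro m hm
  rcases eq_or_lt_of_le hm with hm1 | hm2
  · -- m = 1
    obtain rfl : m = 1 := hm1.symm
    have hLHS : (⨅ i : Fin 1, |a 1 - a ↑i|) = 1 := by
      rw [ciInf_unique]
      norm_num [h0, h1]
    rw [hLHS]
    have hub : ∀ x : Set.Icc (0:ℝ) 1, (⨅ i : Fin 1, |(x:ℝ) - a ↑i|) ≤ 1 := by
      intro x
      rw [ciInf_unique]
      have hx0 := x.2.1
      have hx1 := x.2.2
      show |(x:ℝ) - a 0| ≤ 1
      rw [h0, abs_le]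
      constructor <;> linarith
    haveI : Nonempty (Set.Icc (0:ℝ) 1) := ⟨⟨0, by norm_num⟩⟩
    refine le_antisymm ?_ (ciSup_le hub)
    refine le_ciSup_of_le ⟨1, ?_⟩ ⟨0, by norm_num⟩ ?_
    · rintro y ⟨x, rfl⟩; exact hub x
    · rw [ciInf_unique]
      show (1:ℝ) ≤ |(0:ℝ) - a 0|
      rw [h0]; norm_num
  · -- m ≥ 2
    obtain ⟨n, i, hmeq, hi1, hi2⟩ := decomp m hm2
    subst hmeq
    set m := 2 ^ n + i with hm'
    have hmpos : 0 < m := by omega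
    haveI : Nonempty (Fin m) := ⟨⟨0, hmpos⟩⟩
    have hpw2 : (2:ℝ) ^ (n + 1) = 2 * 2 ^ n := by rw [pow_succ]; ring
    have ham : a m = (2 * (i : ℝ) - 1) / 2 ^ (n + 1) := hrec' n i hi1 hi2
    -- lower bound on minimal distance of a m to prior points
    have hlow : ∀ j : Fin m, (1:ℝ) / 2 ^ (n + 1) ≤ |a m - a ↑j| := by
      intro j
      obtain ⟨q, hq, hqne⟩ := key n i hi1 hi2 j j.isLt
      rw [ham, hq, div_sub_div_same, abs_div, abs_of_pos (by positivity : (0:ℝ) < 2 ^ (n+1))]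
      gcongr
      have hz : (1:ℤ) ≤ |2 * (i:ℤ) - 1 - q| := Int.one_le_abs (by omega)
      have : ((1:ℤ):ℝ) ≤ ((|2 * (i:ℤ) - 1 - q| : ℤ) : ℝ) := by exact_mod_cast hz
      rw [Int.cast_abs] at this
      push_cast at this
      convert this using 2 <;> push_cast <;> try ring
    -- LHS ≤ d : a((i-1)/2^n) is a prior point at distance exactly d
    have hLle : (⨅ j : Fin m, |a m - a ↑j|) ≤ 1 / 2 ^ (n + 1) := by
      obtain ⟨j, hj, haj⟩ := grid n (i - 1) (by omega)
      have hjm : j < m := by omega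
      have hbdd : BddBelow (Set.range fun j : Fin m => |a m - a ↑j|) := by
        refine ⟨0, ?_⟩
        rintro y ⟨jj, rfl⟩
        positivity
      refine le_trans (ciInf_le hbdd ⟨j, hjm⟩) ?_
      show |a m - a j| ≤ 1 / 2 ^ (n + 1)
      rw [ham, haj]
      have hci : ((i - 1 : ℕ) : ℝ) = (i : ℝ) - 1 := by
        rw [Nat.cast_sub hi1]; norm_num
      rw [hci]
      have he : (2 * (i:ℝ) - 1) / 2 ^ (n + 1) - ((i:ℝ) - 1) / 2 ^ n = 1 / 2 ^ (n + 1) := by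
        rw [hpw2]
        field_simp
        ring
      rw [he, abs_of_pos (by positivity)]
    have hLeq : (⨅ j : Fin m, |a m - a ↑j|) = 1 / 2 ^ (n + 1) :=
      le_antisymm hLle (le_ciInf hlow)
    -- upper bound for every x ∈ [0,1]
    have hub : ∀ x : Set.Icc (0:ℝ) 1,
        (⨅ j : Fin m, |(x:ℝ) - a ↑j|) ≤ 1 / 2 ^ (n + 1) := by
      intro x
      obtain ⟨hx0, hx1⟩ := x.2
      set k : ℤ := ⌊(2:ℝ) ^ n * x + 1 / 2⌋ with hk
      have h2n : (0:ℝ) < 2 ^ n := by positivity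
      have hfl : (k:ℝ) ≤ 2 ^ n * x + 1 / 2 := Int.floor_le _
      have hfl2 : (2:ℝ) ^ n * x + 1 / 2 < k + 1 := Int.lt_floor_add_one _
      have hk0 : 0 ≤ k := by
        rw [hk]
        apply Int.le_floor.2
        push_cast
        nlinarith
      have hk1 : k ≤ 2 ^ n := by
        have hr : (k:ℝ) < (2:ℝ) ^ n + 1 := by nlinarith
        have : (k:ℝ) < ((2 ^ n : ℤ) : ℝ) + 1 := by push_cast; linarith
        have : k < 2 ^ n + 1 := by exact_mod_cast this
        omega
      have habs : |(2:ℝ) ^ n * x - k| ≤ 1 / 2 := by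
        rw [abs_le]; constructor <;> linarith
      have hdist : |(x:ℝ) - (k:ℝ) / 2 ^ n| ≤ 1 / 2 ^ (n + 1) := by
        have hrw : (x:ℝ) - (k:ℝ) / 2 ^ n = (2 ^ n * x - k) / 2 ^ n := by
          field_simp
        rw [hrw, abs_div, abs_of_pos h2n, div_le_div_iff₀ h2n (by positivity)]
        rw [hpw2]
        nlinarith
      have hk1' : k ≤ ((2 ^ n : ℕ) : ℤ) := by exact_mod_cast hk1
      obtain ⟨j, hj, haj⟩ := grid n k.toNat (by omega)
      have hjm : j < m := by omega
      have hbdd : BddBelow (Set.range fun j : Fin m => |(x:ℝ) - a ↑j|) := by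
        refine ⟨0, ?_⟩
        rintro y ⟨jj, rfl⟩
        positivity
      refine le_trans (ciInf_le hbdd ⟨j, hjm⟩) ?_
      show |(x:ℝ) - a j| ≤ 1 / 2 ^ (n + 1)
      rw [haj]
      have : ((k.toNat : ℕ) : ℝ) = (k : ℝ) := by
        rw [← Int.cast_natCast]
        congr 1
        omega
      rw [this]
      exact hdist
    -- a m ∈ [0,1]
    have hamem : a m ∈ Set.Icc (0:ℝ) 1 := by
      rw [ham]
      have hi2r : (i:ℝ) ≤ 2 ^ n := by exact_mod_cast hi2
      have hi1r : (1:ℝ) ≤ (i:ℝ) := by exact_mod_cast hi1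
      constructor
      · apply div_nonneg _ (by positivity)
        linarith
      · rw [div_le_one (by positivity), hpw2]
        linarith
    have hRHS : (⨆ x : Set.Icc (0 : ℝ) 1, ⨅ j : Fin m, |(x : ℝ) - a ↑j|)
        = 1 / 2 ^ (n + 1) := by
      haveI : Nonempty (Set.Icc (0:ℝ) 1) := ⟨⟨0, by norm_num⟩⟩
      refine le_antisymm (ciSup_le hub) ?_
      refine le_ciSup_of_le ⟨1 / 2 ^ (n + 1), ?_⟩ ⟨a m, hamem⟩ ?_
      · rintro y ⟨x, rfl⟩; exact hub x
      · exact hLeq.ge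
    rw [hLeq, hRHS]
end

section
/- Let L > 0 and c ∈ (0, L]. For p > 1, the function g(p) = (1 + 1/p)·(p(L - c) + c)/2 attains its minimum at p = √(c/(L-c)) (when c < L), with minimum value L/2 + √(c(L - c)). Moreover, if c > (2+√2)L/4, then L/2 + √(c(L-c)) < c. -/
private lemma bp_aux (a b : ℝ) (ha : 0 < a) (hb : 0 < b) :
    (1 + 1 / Real.sqrt (a * a / (b * b))) * (Real.sqrt (a * a / (b * b)) * (b * b) + a * a) / 2
      = (a * a + b * b) / 2 + Real.sqrt (a * a * (b * b)) := by
  have h1 : a * a / (b * b) = (a / b) * (a / b) := by field_simp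
  have h2 : a * a * (b * b) = (a * b) * (a * b) := by ring
  rw [h1, h2, Real.sqrt_mul_self (div_nonneg ha.le hb.le),
    Real.sqrt_mul_self (mul_nonneg ha.le hb.le)]
  field_simp
  ring

/-- Let `L > 0` and `c ∈ (0, L]`. For `p > 1`, the function
`g p = (1 + 1/p)·(p(L - c) + c)/2` is bounded below by `L/2 + √(c(L-c))`, this value is
attained at `p = √(c/(L-c))` when `c < L`, and if `c > (2+√2)L/4` then
`L/2 + √(c(L-c)) < c`. -/
theorem best_packing_g_min (L c : ℝ) (hL : 0 < L) (hc : c ∈ Set.Ioc (0 : ℝ) L) :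
    (∀ p : ℝ, 1 < p →
      L / 2 + Real.sqrt (c * (L - c)) ≤ (1 + 1 / p) * (p * (L - c) + c) / 2) ∧
    (c < L →
      (1 + 1 / Real.sqrt (c / (L - c))) * (Real.sqrt (c / (L - c)) * (L - c) + c) / 2 =
        L / 2 + Real.sqrt (c * (L - c))) ∧
    ((2 + Real.sqrt 2) * L / 4 < c → L / 2 + Real.sqrt (c * (L - c)) < c) := by
  obtain ⟨hc0, hcL⟩ := hc
  have hLc : 0 ≤ L - c := by linarith
  have hprod : 0 ≤ c * (L - c) := mul_nonneg hc0.le hLc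
  have ht0 : 0 ≤ Real.sqrt (c * (L - c)) := Real.sqrt_nonneg _
  refine ⟨?_, ?_, ?_⟩
  · intro p hp
    have hp0 : 0 < p := by linarith
    set A := p * (L - c) with hA
    set B := c / p with hB
    have hA0 : 0 ≤ A := mul_nonneg hp0.le hLc
    have hB0 : 0 ≤ B := div_nonneg hc0.le hp0.le
    have hAB : A * B = c * (L - c) := by rw [hA, hB]; field_simp
    have hst : Real.sqrt A * Real.sqrt B = Real.sqrt (c * (L - c)) := by
      rw [← Real.sqrt_mul hA0, hAB]
    have key : 2 * Real.sqrt (c * (L - c)) ≤ A + B := by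
      nlinarith [sq_nonneg (Real.sqrt A - Real.sqrt B), Real.sq_sqrt hA0, Real.sq_sqrt hB0, hst]
    have hexp : (1 + 1 / p) * (p * (L - c) + c) = L + A + B := by
      rw [hA, hB]; field_simp; ring
    rw [hexp]
    linarith
  · intro hlt
    have hLc' : 0 < L - c := by linarith
    have apos : 0 < Real.sqrt c := Real.sqrt_pos.mpr hc0
    have bpos : 0 < Real.sqrt (L - c) := Real.sqrt_pos.mpr hLc'
    have hAa : Real.sqrt c * Real.sqrt c = c := Real.mul_self_sqrt hc0.le
    have hBb : Real.sqrt (L - c) * Real.sqrt (L - c) = L - c := Real.mul_self_sqrt hLc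
    have h := bp_aux (Real.sqrt c) (Real.sqrt (L - c)) apos bpos
    rw [hAa, hBb] at h
    rw [h]; ring
  · intro hbig
    have h2 : Real.sqrt 2 ^ 2 = 2 := Real.sq_sqrt (by norm_num)
    have h2pos : 0 < Real.sqrt 2 := Real.sqrt_pos.mpr (by norm_num)
    have hhalf : L / 2 < c := by nlinarith
    have hlt : Real.sqrt (c * (L - c)) < c - L / 2 := by
      rw [Real.sqrt_lt' (by linarith)]
      nlinarith [mul_pos (show (0:ℝ) < c - (2 + Real.sqrt 2) * L / 4 by linarith)
        (show (0:ℝ) < c - (2 - Real.sqrt 2) * L / 4 by nlinarith)]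
    linarith
end

section
/- Let L > 0 and let (d_k)_{k=1}^n and (e_j)_{j=1}^{3n/2} be positive reals (n even) such that Σ_k d_k ≤ L, Σ_j e_j ≤ L, and at least n(1/2 - ε/δ) of the values d_k with |d_k - L/n| < δ/n appear among the e_j (with δ = L/6). If Σ_k |d_k - L/n| ≤ ε, then Σ_j |e_j - L/(3n/2)| ≥ (1/2 - 6ε/L)·L/6. -/
/-- Combinatorial core of the proof that no sequence on a rectifiable arc of length `L`
is asymptotically `s`-energy minimizing for `s > 1`. With `δ = L/6`: if the gaps
`d k` (summing to at most `L`) satisfy `∑ |d k - L/n| ≤ ε`, and at least `n(1/2 - ε/δ)`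
of the gaps `d k` with `|d k - L/n| < δ/n` reappear (injectively) among the gaps `e j`
of the refined configuration of `3n/2` gaps, then
`∑_j |e j - L/(3n/2)| ≥ (1/2 - 6ε/L)·L/6`. -/
theorem gap_survival_lower_bound (n : ℕ) (hn : Even n) (hn1 : 1 ≤ n)
    (L ε : ℝ) (hL : 0 < L) (hε : 0 ≤ ε)
    (d : Fin n → ℝ) (e : Fin (3 * n / 2) → ℝ)
    (hd : ∀ k, 0 < d k) (he : ∀ j, 0 < e j)
    (hdsum : ∑ k, d k ≤ L) (hesum : ∑ j, e j ≤ L)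
    (hdev : ∑ k, |d k - L / n| ≤ ε)
    (S : Finset (Fin n))
    (hScard : (n : ℝ) * (1 / 2 - ε / (L / 6)) ≤ S.card)
    (hSdev : ∀ k ∈ S, |d k - L / n| < (L / 6) / n)
    (φ : Fin n → Fin (3 * n / 2)) (hφ : Set.InjOn φ S)
    (hφe : ∀ k ∈ S, e (φ k) = d k) :
    (1 / 2 - 6 * ε / L) * (L / 6) ≤ ∑ j, |e j - L / (3 * (n : ℝ) / 2)| := by
  have hn0 : (0 : ℝ) < (n : ℝ) := by exact_mod_cast hn1
  set c : ℝ := L / (3 * (n : ℝ) / 2) with hc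
  by_cases hneg : 1 / 2 - 6 * ε / L ≤ 0
  · calc (1 / 2 - 6 * ε / L) * (L / 6) ≤ 0 := by
          apply mul_nonpos_of_nonpos_of_nonneg hneg; positivity
      _ ≤ ∑ j, |e j - c| := Finset.sum_nonneg fun j _ => abs_nonneg _
  push_neg at hneg
  have heq : ε / (L / 6) = 6 * ε / L := by field_simp
  -- each survivor contributes at least L/(6n)
  have hkey : ∀ k ∈ S, L / (6 * n) ≤ |d k - c| := by
    intro k hk
    have h1 := hSdev k hk
    have h2 : L / n - L / 6 / n < d k := by
      have := abs_lt.mp h1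
      linarith [this.1]
    have hcval : c = 2 * L / (3 * n) := by
      rw [hc]; field_simp
    have : L / (6 * n) ≤ d k - c := by
      rw [hcval]
      have : L / n - L / 6 / n - 2 * L / (3 * n) = L / (6 * n) := by
        field_simp; ring
      nlinarith
    calc L / (6 * n) ≤ d k - c := this
      _ ≤ |d k - c| := le_abs_self _
  have hsub : ∑ j ∈ S.image φ, |e j - c| ≤ ∑ j, |e j - c| :=
    Finset.sum_le_sum_of_subset_of_nonneg (Finset.subset_univ _)
      (fun j _ _ => abs_nonneg _)
  have himg : ∑ j ∈ S.image φ, |e j - c| = ∑ k ∈ S, |d k - c| := by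
    rw [Finset.sum_image (fun a ha b hb h => hφ ha hb h)]
    exact Finset.sum_congr rfl fun k hk => by rw [hφe k hk]
  have hlow : (S.card : ℝ) * (L / (6 * n)) ≤ ∑ k ∈ S, |d k - c| := by
    calc (S.card : ℝ) * (L / (6 * n)) = ∑ _k ∈ S, L / (6 * n) := by
          rw [Finset.sum_const, nsmul_eq_mul]
      _ ≤ ∑ k ∈ S, |d k - c| := Finset.sum_le_sum hkey
  have hScard' : (n : ℝ) * (1 / 2 - 6 * ε / L) ≤ S.card := by rw [← heq]; exact hScard
  have hfin : (1 / 2 - 6 * ε / L) * (L / 6) ≤ (S.card : ℝ) * (L / (6 * n)) := by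
    have hL6n : (0 : ℝ) < L / (6 * n) := by positivity
    calc (1 / 2 - 6 * ε / L) * (L / 6)
        = ((n : ℝ) * (1 / 2 - 6 * ε / L)) * (L / (6 * n)) := by field_simp
      _ ≤ (S.card : ℝ) * (L / (6 * n)) := by
          exact mul_le_mul_of_nonneg_right hScard' hL6n.le
  linarith [hsub, himg.symm ▸ hlow]
end

section
/- Let n ≥ 1 and let X = {x_0, …, x_n} and Y = {x_0, …, x_{n + n/p}} (p > 1 rational with n/p ∈ ℤ) be nested finite subsets of a rectifiable Jordan arc Γ of length L, listed in order along the arc. Then ((p-1)n/p)·δ(X) + (2n/p)·δ(Y) ≤ L, where δ(ω) = min distance between distinct points of ω. -/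
/-- Let `Γ` be a rectifiable Jordan arc of length `L` in `ℝ^P`, parametrized
injectively and continuously by `γ` on `[0,1]`. Let `Y = {γ(t i)}` be `n + q + 1`
points listed in order along the arc (`q = n/p` with `1 ≤ q < n`, i.e. `p = n/q > 1`),
and let `X ⊆ Y` consist of `n + 1` of them (chosen by the strictly monotone selection
`σ`). If `δX` (resp. `δY`) is a lower bound for the distances between distinct points
of `X` (resp. `Y`), in particular for their minimal separations, then
`((p-1)n/p)·δX + (2n/p)·δY = (n - q)·δX + 2q·δY ≤ L`. -/
theorem nested_best_packing_bound {P : ℕ}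
    (γ : ℝ → EuclideanSpace ℝ (Fin P))
    (hcont : ContinuousOn γ (Set.Icc 0 1)) (hinj : Set.InjOn γ (Set.Icc 0 1))
    (L : ℝ) (hL : eVariationOn γ (Set.Icc 0 1) = ENNReal.ofReal L)
    (n q : ℕ) (hq : 1 ≤ q) (hqn : q < n)
    (t : Fin (n + q + 1) → ℝ) (ht : StrictMono t)
    (htmem : ∀ i, t i ∈ Set.Icc (0 : ℝ) 1)
    (σ : Fin (n + 1) → Fin (n + q + 1)) (hσ : StrictMono σ)
    (δX δY : ℝ)
    (hδX : ∀ i j : Fin (n + 1), i ≠ j → δX ≤ dist (γ (t (σ i))) (γ (t (σ j))))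
    (hδY : ∀ i j : Fin (n + q + 1), i ≠ j → δY ≤ dist (γ (t i)) (γ (t j)))
    (hδX0 : 0 ≤ δX) (hδY0 : 0 ≤ δY) :
    ((n : ℝ) - q) * δX + 2 * (q : ℝ) * δY ≤ L := by
  -- `0 ≤ L`
  have hL0 : 0 ≤ L := by
    by_contra h
    push_neg at h
    have h0 : ENNReal.ofReal L = 0 := by
      simp [ENNReal.ofReal_eq_zero, h.le]
    have hev : eVariationOn γ (Set.Icc 0 1) = 0 := by rw [hL, h0]
    have hle := eVariationOn.edist_le γ (htmem ⟨0, by omega⟩) (htmem ⟨n + q, by omega⟩)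
    rw [hev, le_zero_iff, edist_eq_zero] at hle
    have := hinj (htmem ⟨0, by omega⟩) (htmem ⟨n + q, by omega⟩) hle
    have h01 : t ⟨0, by omega⟩ < t ⟨n + q, by omega⟩ := ht (by simp [Fin.lt_def]; omega)
    exact absurd this h01.ne
  -- natural-number version of σ
  set σ' : ℕ → ℕ := fun i => (σ ⟨min i n, by omega⟩ : ℕ) with hσ'def
  have hσ'succ : ∀ i, i < n → σ' i < σ' (i + 1) := by
    intro i hi
    have : (⟨min i n, by omega⟩ : Fin (n + 1)) < ⟨min (i + 1) n, by omega⟩ := by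
      simp only [Fin.lt_def]; omega
    exact hσ this
  have hσ'le : ∀ i, σ' i ≤ n + q := fun i => Nat.lt_succ_iff.mp (σ _).isLt
  have hσ'mono : ∀ i j, i ≤ j → σ' i ≤ σ' j := by
    intro i j hij
    have : (⟨min i n, by omega⟩ : Fin (n + 1)) ≤ ⟨min j n, by omega⟩ := by
      simp only [Fin.le_def]; omega
    exact hσ.monotone this
  -- the "unsplit" step indices
  set B : Finset ℕ := (Finset.range n).filter (fun i => σ' (i + 1) = σ' i + 1) with hBdef
  -- counting: |B| ≥ n - q
  have key : ∀ m, m ≤ n →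
      σ' 0 + m + ((Finset.range m).filter (fun i => ¬ σ' (i + 1) = σ' i + 1)).card ≤ σ' m := by
    intro m hm
    induction m with
    | zero => simp
    | succ m ih =>
      have h1 := ih (by omega)
      rw [Finset.range_add_one, Finset.filter_insert]
      by_cases hP : ¬ σ' (m + 1) = σ' m + 1
      · rw [if_pos hP, Finset.card_insert_of_notMem (by simp)]
        have : σ' m + 2 ≤ σ' (m + 1) := by
          have := hσ'succ m (by omega); omega
        omega
      · rw [if_neg hP]
        have : σ' m + 1 ≤ σ' (m + 1) := hσ'succ m (by omega)
        omega
  have hBcard : n ≤ B.card + q := by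
    have h1 := key n le_rfl
    have h2 := hσ'le n
    have h3 := Finset.card_filter_add_card_filter_not
      (s := Finset.range n) (p := fun i => σ' (i + 1) = σ' i + 1)
    rw [Finset.card_range] at h3
    have h4 : B.card = ((Finset.range n).filter (fun i => σ' (i + 1) = σ' i + 1)).card := by
      rw [hBdef]
    omega
  set A : Finset ℕ := B.image σ' with hAdef
  have hAB : A.card = B.card := by
    apply Finset.card_image_of_injOn
    intro a ha b hb hab
    rw [Finset.mem_coe, hBdef, Finset.mem_filter, Finset.mem_range] at ha hb
    by_contra hne
    rcases Nat.lt_or_ge a b with h | h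
    · have := hσ'succ a ha.1
      have := hσ'mono (a + 1) b h
      omega
    · have hba : b < a := by omega
      have := hσ'succ b hb.1
      have := hσ'mono (b + 1) a hba
      omega
  have hAsub : A ⊆ Finset.range (n + q) := by
    intro k hk
    simp only [hAdef, Finset.mem_image] at hk
    obtain ⟨i, hi, rfl⟩ := hk
    simp only [hBdef, Finset.mem_filter, Finset.mem_range] at hi
    have h1 := hσ'succ i hi.1
    have h2 := hσ'le (i + 1)
    simp only [Finset.mem_range]
    omega
  -- the partition along Y
  set u : ℕ → ℝ := fun k => t ⟨min k (n + q), by omega⟩ with hudef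
  have humono : Monotone u := by
    intro a b hab
    exact ht.monotone (by simp only [Fin.le_def]; omega)
  have hsum := eVariationOn.sum_le (f := γ) (n := n + q) humono (fun k => htmem _)
  rw [hL] at hsum
  set d : ℕ → ℝ := fun k => dist (γ (u (k + 1))) (γ (u k)) with hddef
  have hsum' : ∑ k ∈ Finset.range (n + q), d k ≤ L := by
    rw [← ENNReal.ofReal_le_ofReal_iff hL0,
      ENNReal.ofReal_sum_of_nonneg (fun k _ => dist_nonneg)]
    refine le_trans (le_of_eq ?_) hsum
    refine Finset.sum_congr rfl fun k _ => ?_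
    rw [edist_dist]
  -- pointwise bounds
  have huval : ∀ k, ∀ hk : k < n + q + 1, u k = t ⟨k, hk⟩ := by
    intro k hk
    simp only [hudef]
    congr 1
    exact Fin.ext (by simp; omega)
  have hdY : ∀ k, k < n + q → δY ≤ d k := by
    intro k hk
    show δY ≤ dist (γ (u (k + 1))) (γ (u k))
    rw [huval k (by omega), huval (k + 1) (by omega)]
    exact hδY ⟨k + 1, by omega⟩ ⟨k, by omega⟩ (by simp [Fin.ext_iff])
  have hdX : ∀ k ∈ A, δX ≤ d k := by
    intro k hk
    simp only [hAdef, Finset.mem_image] at hk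
    obtain ⟨i, hi, rfl⟩ := hk
    simp only [hBdef, Finset.mem_filter, Finset.mem_range] at hi
    have hlt : σ' i < n + q := by
      have := hσ'succ i hi.1
      have := hσ'le (i + 1)
      omega
    show δX ≤ dist (γ (u (σ' i + 1))) (γ (u (σ' i)))
    rw [huval _ (by omega : σ' i + 1 < n + q + 1), huval _ (by omega : σ' i < n + q + 1)]
    have e1 : (⟨σ' i + 1, by omega⟩ : Fin (n + q + 1)) = σ ⟨min (i + 1) n, by omega⟩ := by
      have := hi.2
      exact Fin.ext (by simpa using this.symm)
    have e0 : (⟨σ' i, by omega⟩ : Fin (n + q + 1)) = σ ⟨min i n, by omega⟩ := by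
      exact Fin.ext (by simp [hσ'def])
    rw [e1, e0]
    refine hδX _ _ ?_
    simp only [ne_eq, Fin.ext_iff, Fin.val_mk]
    omega
  -- assemble
  set M : ℝ := max δX δY with hMdef
  have hdM : ∀ k ∈ A, M ≤ d k := by
    intro k hk
    exact max_le (hdX k hk) (hdY k (by have := hAsub hk; simpa using this))
  have hsplit : ∑ k ∈ A, d k + ∑ k ∈ Finset.range (n + q) \ A, d k
      = ∑ k ∈ Finset.range (n + q), d k := by
    rw [add_comm]
    exact Finset.sum_sdiff hAsub
  have h1 : (A.card : ℝ) * M ≤ ∑ k ∈ A, d k := by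
    calc (A.card : ℝ) * M = ∑ _k ∈ A, M := by rw [Finset.sum_const, nsmul_eq_mul]
    _ ≤ ∑ k ∈ A, d k := Finset.sum_le_sum hdM
  have h2 : ((Finset.range (n + q) \ A).card : ℝ) * δY ≤ ∑ k ∈ Finset.range (n + q) \ A, d k := by
    calc ((Finset.range (n + q) \ A).card : ℝ) * δY
        = ∑ _k ∈ Finset.range (n + q) \ A, δY := by rw [Finset.sum_const, nsmul_eq_mul]
    _ ≤ _ := Finset.sum_le_sum (fun k hk => hdY k (by
        have := (Finset.mem_sdiff.mp hk).1; simpa using this))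
  have hcardsd : (Finset.range (n + q) \ A).card = n + q - A.card := by
    rw [Finset.card_sdiff_of_subset hAsub, Finset.card_range]
  have hAle : A.card ≤ n + q := by
    have := Finset.card_le_card hAsub
    simpa using this
  have hAge : n ≤ A.card + q := by rw [hAB]; exact hBcard
  -- final arithmetic
  have hMX : δX ≤ M := le_max_left _ _
  have hMY : δY ≤ M := le_max_right _ _
  have hfinal : ((n : ℝ) - q) * δX + 2 * (q : ℝ) * δY
      ≤ (A.card : ℝ) * M + ((n + q - A.card : ℕ) : ℝ) * δY := by
    have hc1 : ((n : ℝ) - q) ≤ (A.card : ℝ) := by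
      have : (n : ℝ) ≤ (A.card : ℝ) + q := by exact_mod_cast hAge
      linarith
    have hc2 : ((n + q - A.card : ℕ) : ℝ) = (n : ℝ) + q - A.card := by
      have := hAle
      push_cast [Nat.cast_sub this]
      ring
    have hqn' : (q : ℝ) < (n : ℝ) := by exact_mod_cast hqn
    rw [hc2]
    nlinarith [mul_le_mul_of_nonneg_left hMX (by linarith : (0:ℝ) ≤ (n:ℝ) - q),
      mul_le_mul_of_nonneg_left hMY (by linarith : (0:ℝ) ≤ (A.card : ℝ) - ((n:ℝ) - q))]
  calc ((n : ℝ) - q) * δX + 2 * (q : ℝ) * δY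
      ≤ (A.card : ℝ) * M + ((n + q - A.card : ℕ) : ℝ) * δY := hfinal
    _ ≤ ∑ k ∈ A, d k + ∑ k ∈ Finset.range (n + q) \ A, d k := by
        rw [← hcardsd]; exact add_le_add h1 h2
    _ = ∑ k ∈ Finset.range (n + q), d k := hsplit
    _ ≤ L := hsum'
end

section
/- Let A ⊂ ℝ^p be compact with H_δ(A) > 0 and let w: A×A → [0,∞] be a bounded lower semicontinuous symmetric weight. Then any greedy (w,s)-energy sequence with s > δ satisfies E_s^w(α_N) ≤ M·‖w‖·H_δ^∞(A)^{-s/δ}·N^{1+s/δ} for all N ≥ 2, where M depends only on s, δ, A, ‖w‖ = sup w, and H_δ^∞ is the δ-dimensional Hausdorff content. -/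
open MeasureTheory
open scoped ENNReal NNReal

/-- The `δ`-dimensional Hausdorff content `H_δ^∞(A) = inf { ∑ (diam G_i)^δ : A ⊆ ⋃ G_i }`. -/
noncomputable def hausdorffContent {P : ℕ} (δ : ℝ) (A : Set (EuclideanSpace ℝ (Fin P))) :
    ENNReal :=
  ⨅ (G : ℕ → Set (EuclideanSpace ℝ (Fin P))) (_ : A ⊆ ⋃ i, G i),
    ∑' i, EMetric.diam (G i) ^ δ

set_option maxHeartbeats 1000000
open scoped Classical

namespace GreedyAux

variable {P : ℕ} {δ : ℝ}

lemma diam_empty_pow (hδ : 0 < δ) :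
    (EMetric.diam (∅ : Set (EuclideanSpace ℝ (Fin P)))) ^ δ = 0 := by
  rw [show EMetric.diam (∅ : Set (EuclideanSpace ℝ (Fin P))) = 0 from EMetric.diam_empty,
    ENNReal.zero_rpow_of_pos hδ]

noncomputable def hcOM (P : ℕ) (δ : ℝ) (hδ : 0 < δ) :
    OuterMeasure (EuclideanSpace ℝ (Fin P)) :=
  OuterMeasure.ofFunction (fun s => EMetric.diam s ^ δ) (diam_empty_pow hδ)

lemma hc_eq (hδ : 0 < δ) (A : Set (EuclideanSpace ℝ (Fin P))) :
    hausdorffContent δ A = hcOM P δ hδ A := by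
  rw [hcOM, OuterMeasure.ofFunction_apply]; rfl

lemma hc_mono (hδ : 0 < δ) {A B : Set (EuclideanSpace ℝ (Fin P))} (h : A ⊆ B) :
    hausdorffContent δ A ≤ hausdorffContent δ B := by
  rw [hc_eq hδ, hc_eq hδ]; exact measure_mono h

lemma hc_iUnion_le (hδ : 0 < δ) {ι : Type*} [Countable ι]
    (E : ι → Set (EuclideanSpace ℝ (Fin P))) :
    hausdorffContent δ (⋃ i, E i) ≤ ∑' i, hausdorffContent δ (E i) := by
  rw [hc_eq hδ]
  refine le_trans (measure_iUnion_le E) ?_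
  refine Summable.tsum_le_tsum (fun i => ?_) ENNReal.summable ENNReal.summable
  rw [hc_eq hδ]

lemma hc_le_diam_pow (hδ : 0 < δ) (A : Set (EuclideanSpace ℝ (Fin P))) :
    hausdorffContent δ A ≤ EMetric.diam A ^ δ := by
  refine iInf_le_of_le (fun i => if i = 0 then A else ∅) ?_
  refine iInf_le_of_le ?_ ?_
  · intro x hx; exact Set.mem_iUnion.2 ⟨0, by simpa using hx⟩
  · calc (∑' i : ℕ, EMetric.diam (if i = 0 then A else ∅) ^ δ)
        = ∑' i : ℕ, (if i = 0 then EMetric.diam A ^ δ else 0) := by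
          congr 1; funext i
          split
          · rfl
          · exact diam_empty_pow hδ
      _ ≤ EMetric.diam A ^ δ := le_of_eq (tsum_ite_eq 0 _)

lemma hc_ne_top (hδ : 0 < δ) {A : Set (EuclideanSpace ℝ (Fin P))}
    (hA : Bornology.IsBounded A) : hausdorffContent δ A ≠ ⊤ := by
  refine ne_top_of_le_ne_top ?_ (hc_le_diam_pow hδ A)
  exact ENNReal.rpow_ne_top_of_nonneg hδ.le hA.ediam_ne_top

lemma hc_pos (hδ : 0 < δ)
    {A : Set (EuclideanSpace ℝ (Fin P))}
    (hHaus : 0 < (MeasureTheory.Measure.hausdorffMeasure δ :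
      Measure (EuclideanSpace ℝ (Fin P))) A) :
    0 < hausdorffContent δ A := by
  by_contra h
  push_neg at h
  have h0 : hausdorffContent δ A = 0 := le_antisymm h (zero_le)
  have hz : (MeasureTheory.Measure.hausdorffMeasure δ :
      Measure (EuclideanSpace ℝ (Fin P))) A = 0 := by
    rw [Measure.hausdorffMeasure_apply]
    simp only [ENNReal.iSup_eq_zero]
    intro r hr
    set ρ : ℝ≥0∞ := min r 1 with hρdef
    have hρ0 : 0 < ρ := lt_min hr zero_lt_one
    have hρr : ρ ≤ r := min_le_left _ _
    refine le_antisymm ?_ (zero_le)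
    refine ENNReal.le_of_forall_pos_le_add fun ε hε _ => ?_
    rw [zero_add]
    have hb : 0 < min (ε : ℝ≥0∞) (ρ ^ δ) := by
      refine lt_min (by exact_mod_cast hε) ?_
      exact ENNReal.rpow_pos hρ0 (by simp [hρdef])
    have : hausdorffContent δ A < min (ε : ℝ≥0∞) (ρ ^ δ) := h0 ▸ hb
    rw [hausdorffContent, iInf_lt_iff] at this
    obtain ⟨G, hG⟩ := this
    rw [iInf_lt_iff] at hG
    obtain ⟨hGA, hGsum⟩ := hG
    have hdiam : ∀ n, EMetric.diam (G n) ≤ r := by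
      intro n
      refine le_trans ?_ hρr
      rw [← ENNReal.rpow_le_rpow_iff hδ]
      exact le_trans (ENNReal.le_tsum n) (le_trans hGsum.le (min_le_right _ _))
    calc (⨅ t, ⨅ (_ : A ⊆ ⋃ n, t n), ⨅ (_ : ∀ n, EMetric.diam (t n) ≤ r),
            ∑' n, ⨆ (_ : (t n).Nonempty), EMetric.diam (t n) ^ δ)
        ≤ ∑' n, ⨆ (_ : (G n).Nonempty), EMetric.diam (G n) ^ δ :=
          iInf_le_of_le G (iInf_le_of_le hGA (iInf_le _ hdiam))
      _ ≤ ∑' n, EMetric.diam (G n) ^ δ :=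
          Summable.tsum_le_tsum (fun n => iSup_le fun _ => le_rfl) ENNReal.summable ENNReal.summable
      _ ≤ (ε : ℝ≥0∞) := le_trans hGsum.le (min_le_left _ _)
  exact absurd hz (ne_of_gt hHaus)



variable {P : ℕ}

/-- side length of level-`k` dyadic cubes inside `[-T, T)^P`. -/
noncomputable def side (T : ℝ) (k : ℕ) : ℝ := 2 * T / 2 ^ k

lemma side_pos {T : ℝ} (hT : 0 < T) (k : ℕ) : 0 < side T k := by
  have : (0:ℝ) < 2 ^ k := by positivity
  unfold side; positivity

lemma side_succ (T : ℝ) (k : ℕ) : side T (k + 1) = side T k / 2 := by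
  unfold side; rw [pow_succ]; ring

/-- The level-`k` dyadic cube with index `z`. -/
def cube (T : ℝ) (k : ℕ) (z : Fin P → ℕ) : Set (EuclideanSpace ℝ (Fin P)) :=
  {x | ∀ j, 0 ≤ x j + T ∧ ⌊(x j + T) / side T k⌋₊ = z j}

lemma mem_cube_iff {T : ℝ} (hT : 0 < T) {k : ℕ} {z : Fin P → ℕ}
    {x : EuclideanSpace ℝ (Fin P)} :
    x ∈ cube T k z ↔ ∀ j, (z j : ℝ) * side T k ≤ x j + T ∧ x j + T < (z j + 1) * side T k := by
  have hs := side_pos hT k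
  constructor
  · intro h j
    obtain ⟨h0, hf⟩ := h j
    have h1 : (z j : ℝ) ≤ (x j + T) / side T k := hf ▸ Nat.floor_le (by positivity)
    have h2 : (x j + T) / side T k < z j + 1 := hf ▸ Nat.lt_floor_add_one _
    constructor
    · calc (z j : ℝ) * side T k ≤ (x j + T) / side T k * side T k := by
            exact mul_le_mul_of_nonneg_right h1 hs.le
        _ = x j + T := div_mul_cancel₀ _ hs.ne'
    · calc x j + T = (x j + T) / side T k * side T k := (div_mul_cancel₀ _ hs.ne').symm
        _ < (z j + 1) * side T k := by exact mul_lt_mul_of_pos_right h2 hs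
  · intro h j
    obtain ⟨h1, h2⟩ := h j
    have h0 : 0 ≤ x j + T := le_trans (by positivity) h1
    refine ⟨h0, ?_⟩
    rw [Nat.floor_eq_iff (by positivity)]
    constructor
    · rw [le_div_iff₀ hs]; exact h1
    · rw [div_lt_iff₀ hs]; push_cast; exact h2
  
lemma cube_subset_parent {T : ℝ} (hT : 0 < T) {k : ℕ} (z : Fin P → ℕ) :
    cube T (k + 1) z ⊆ cube T k (fun j => z j / 2) := by
  intro x hx j
  obtain ⟨h0, hf⟩ := hx j
  refine ⟨h0, ?_⟩
  have hrw : (x j + T) / side T k = ((x j + T) / side T (k+1)) / (2:ℕ) := by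
    rw [side_succ]; push_cast; rw [div_div, div_mul_cancel₀ _ (two_ne_zero)]
  rw [hrw, Nat.floor_div_natCast, hf]

lemma cube_subset_anc {T : ℝ} (hT : 0 < T) {k j : ℕ} (z : Fin P → ℕ) :
    cube T (k + j) z ⊆ cube T k (fun i => z i / 2 ^ j) := by
  induction j generalizing z with
  | zero => simp [Nat.div_one]
  | succ j ih =>
      intro x hx
      have h1 : x ∈ cube T (k + j) (fun i => z i / 2) := by
        have := cube_subset_parent hT (k := k + j) z
        rw [Nat.add_succ] at hx
        exact this hx
      have h2 := ih (fun i => z i / 2) h1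
      have : (fun i => z i / 2 / 2 ^ j) = (fun i => z i / 2 ^ (j + 1)) := by
        funext i
        rw [Nat.div_div_eq_div_mul, pow_succ, mul_comm (2^j) 2, ← pow_succ']
      rwa [this] at h2

lemma cube_cover_children {T : ℝ} (hT : 0 < T) {k : ℕ} (c : Fin P → ℕ) :
    cube T k c ⊆ ⋃ (t : Fin P → Fin 2), cube T (k + 1) (fun i => 2 * c i + (t i : ℕ)) := by
  intro x hx
  set zf : Fin P → ℕ := fun i => ⌊(x i + T) / side T (k+1)⌋₊ with hzf
  have hhalf : ∀ i, zf i / 2 = c i := by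
    intro i
    have hrw : (x i + T) / side T k = ((x i + T) / side T (k+1)) / (2:ℕ) := by
      rw [side_succ]; push_cast; rw [div_div, div_mul_cancel₀ _ (two_ne_zero)]
    have := (hx i).2
    rw [hrw, Nat.floor_div_natCast] at this
    exact this
  refine Set.mem_iUnion.2 ⟨fun i => ⟨zf i % 2, Nat.mod_lt _ two_pos⟩, ?_⟩
  intro i
  refine ⟨(hx i).1, ?_⟩
  have : 2 * c i + zf i % 2 = zf i := by
    have := hhalf i; omega
  show _ = 2 * c i + zf i % 2; rw [this]

lemma abs_coord_le_dist {x y : EuclideanSpace ℝ (Fin P)} (j : Fin P) :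
    |x j - y j| ≤ dist x y := by
  rw [EuclideanSpace.dist_eq, ← Real.sqrt_sq_eq_abs]
  refine Real.sqrt_le_sqrt ?_
  have : dist (x j) (y j) ^ 2 = (x j - y j) ^ 2 := by
    rw [Real.dist_eq, sq_abs]
  rw [← this]
  exact Finset.single_le_sum (f := fun i => dist (x i) (y i) ^ 2)
    (fun i _ => sq_nonneg _) (Finset.mem_univ j)

lemma dist_le_of_mem_cube {T : ℝ} (hT : 0 < T) {k : ℕ} {z : Fin P → ℕ}
    {x y : EuclideanSpace ℝ (Fin P)} (hx : x ∈ cube T k z) (hy : y ∈ cube T k z) :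
    dist x y ≤ Real.sqrt P * side T k := by
  have hs := side_pos hT k
  rw [EuclideanSpace.dist_eq]
  have hcoord : ∀ j, dist (x j) (y j) ^ 2 ≤ side T k ^ 2 := by
    intro j
    have h1 := (mem_cube_iff hT).1 hx j
    have h2 := (mem_cube_iff hT).1 hy j
    have : |x j - y j| ≤ side T k := by
      rw [abs_le]
      constructor <;> nlinarith [h1.1, h1.2, h2.1, h2.2]
    calc dist (x j) (y j) ^ 2 = |x j - y j| ^ 2 := by rw [Real.dist_eq]
      _ ≤ side T k ^ 2 := pow_le_pow_left₀ (abs_nonneg _) this 2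
  calc Real.sqrt (∑ j, dist (x j) (y j) ^ 2) ≤ Real.sqrt (∑ _j : Fin P, side T k ^ 2) :=
        Real.sqrt_le_sqrt (Finset.sum_le_sum fun j _ => hcoord j)
    _ = Real.sqrt (P * side T k ^ 2) := by rw [Finset.sum_const, Finset.card_univ]; simp [nsmul_eq_mul]
    _ = Real.sqrt P * side T k := by
        rw [Real.sqrt_mul (by positivity), Real.sqrt_sq hs.le]

lemma subset_top_cube {T : ℝ} (hT : 0 < T) {A : Set (EuclideanSpace ℝ (Fin P))}
    (hb : ∀ x ∈ A, ∀ j, |x j| < T) : A ⊆ cube T 0 (fun _ => 0) := by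
  intro x hx
  rw [mem_cube_iff hT]
  intro j
  have := hb x hx j
  rw [abs_lt] at this
  unfold side
  constructor
  · push_cast; nlinarith [this.1]
  · push_cast; nlinarith [this.2]


variable {P : ℕ}
/-- diameter «target» at level `k`. -/
noncomputable def Dk (P : ℕ) (T δ : ℝ) (k : ℕ) : ℝ := (Real.sqrt P * side T k) ^ δ

lemma Dk_nonneg {T δ : ℝ} (hT : 0 < T) (k : ℕ) : 0 ≤ Dk P T δ k := by
  have := Real.sqrt_nonneg (P:ℝ)
  have : (0:ℝ) < 2 ^ k := by positivity
  unfold Dk side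
  positivity

noncomputable def nu (T δ : ℝ) (A : Set (EuclideanSpace ℝ (Fin P))) (m : ℕ) :
    ℕ → (Fin P → ℕ) → ℝ
  | 0, z => if (A ∩ cube T m z).Nonempty then Dk P T δ m else 0
  | j+1, c => min (Dk P T δ (m - (j+1)))
      (∑ t : Fin P → Fin 2, nu T δ A m j (fun i => 2 * c i + (t i : ℕ)))

noncomputable def Mw (T δ : ℝ) (A : Set (EuclideanSpace ℝ (Fin P))) (m : ℕ) :
    ℕ → (Fin P → ℕ) → ℝ
  | 0, z => nu T δ A m m z
  | k+1, z => Mw T δ A m k (fun j => z j / 2) *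
      (nu T δ A m (m - (k+1)) z /
        ∑ t : Fin P → Fin 2, nu T δ A m (m - (k+1)) (fun i => 2 * (z i / 2) + (t i : ℕ)))

variable {T δ : ℝ} {A : Set (EuclideanSpace ℝ (Fin P))} {m : ℕ}

lemma nu_nonneg (hT : 0 < T) (j : ℕ) (c : Fin P → ℕ) : 0 ≤ nu T δ A m j c := by
  induction j generalizing c with
  | zero =>
      simp only [nu]
      split
      · exact Dk_nonneg hT m
      · exact le_rfl
  | succ j ih =>
      simp only [nu]
      exact le_min (Dk_nonneg hT _) (Finset.sum_nonneg fun t _ => ih _)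

lemma nu_le_Dk (hT : 0 < T) (j : ℕ) (c : Fin P → ℕ) : nu T δ A m j c ≤ Dk P T δ (m - j) := by
  cases j with
  | zero =>
      simp only [nu, Nat.sub_zero]
      split
      · exact le_rfl
      · exact Dk_nonneg hT m
  | succ j => simp only [nu]; exact min_le_left _ _

lemma nu_le_children_sum (hT : 0 < T) (j : ℕ) (z : Fin P → ℕ) :
    nu T δ A m j z ≤ ∑ t : Fin P → Fin 2, nu T δ A m j (fun i => 2 * (z i / 2) + (t i : ℕ)) := by
  have hz : (fun i => 2 * (z i / 2) + (((fun i' => (⟨z i' % 2, Nat.mod_lt _ two_pos⟩ : Fin 2)) i : Fin 2) : ℕ)) = z := by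
    funext i; simp only []; omega
  calc nu T δ A m j z
      = nu T δ A m j (fun i => 2 * (z i / 2) +
          (((fun i' => (⟨z i' % 2, Nat.mod_lt _ two_pos⟩ : Fin 2)) i : Fin 2) : ℕ)) := by rw [hz]
    _ ≤ _ := Finset.single_le_sum (f := fun t : Fin P → Fin 2 =>
          nu T δ A m j (fun i => 2 * (z i / 2) + (t i : ℕ)))
          (fun t _ => nu_nonneg hT j _) (Finset.mem_univ _)

lemma Mw_nonneg (hT : 0 < T) (k : ℕ) (z : Fin P → ℕ) : 0 ≤ Mw T δ A m k z := by
  induction k generalizing z with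
  | zero => exact nu_nonneg hT m z
  | succ k ih =>
      simp only [Mw]
      exact mul_nonneg (ih _) (div_nonneg (nu_nonneg hT _ _)
        (Finset.sum_nonneg fun t _ => nu_nonneg hT _ _))

lemma Mw_le_nu (hT : 0 < T) (k : ℕ) (hk : k ≤ m) (z : Fin P → ℕ) :
    Mw T δ A m k z ≤ nu T δ A m (m - k) z := by
  induction k generalizing z with
  | zero => simp only [Mw, Nat.sub_zero]; exact le_rfl
  | succ k ih =>
      simp only [Mw]
      set S := ∑ t : Fin P → Fin 2, nu T δ A m (m - (k+1)) (fun i => 2 * (z i / 2) + (t i : ℕ))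
        with hS
      have hS0 : 0 ≤ S := Finset.sum_nonneg fun t _ => nu_nonneg hT _ _
      rcases eq_or_lt_of_le hS0 with hSz | hSpos
      · -- S = 0 : numerator is 0 as well
        have hnum : nu T δ A m (m - (k+1)) z = 0 :=
          le_antisymm (le_trans (nu_le_children_sum hT _ z) (le_of_eq hSz.symm))
            (nu_nonneg hT _ _)
        rw [hnum]
        simp [nu_nonneg hT]
      · have hMp : Mw T δ A m k (fun j => z j / 2) ≤ S := by
          have h1 := ih (Nat.le_of_succ_le hk) (fun j => z j / 2)
          have hmk : m - k = (m - (k+1)) + 1 := by omega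
          rw [hmk] at h1
          simp only [nu] at h1
          exact le_trans h1 (min_le_right _ _)
        calc Mw T δ A m k (fun j => z j / 2) * (nu T δ A m (m - (k+1)) z / S)
            ≤ S * (nu T δ A m (m - (k+1)) z / S) := by
              exact mul_le_mul_of_nonneg_right hMp
                (div_nonneg (nu_nonneg hT _ _) hS0)
          _ = nu T δ A m (m - (k+1)) z := by
              rw [mul_div_cancel₀ _ (ne_of_gt hSpos)]
        
lemma Mw_children_sum (hT : 0 < T) (k : ℕ) (hk : k + 1 ≤ m) (c : Fin P → ℕ) :
    ∑ t : Fin P → Fin 2, Mw T δ A m (k+1) (fun i => 2 * c i + (t i : ℕ)) = Mw T δ A m k c := by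
  have hpar' : ∀ (t : Fin P → Fin 2) (j : Fin P), (2 * c j + (t j : ℕ)) / 2 = c j := by
    intro t j; have := (t j).isLt; omega
  have hstep : ∀ t : Fin P → Fin 2, Mw T δ A m (k+1) (fun i => 2 * c i + (t i : ℕ)) =
      Mw T δ A m k c * (nu T δ A m (m - (k+1)) (fun i => 2 * c i + (t i : ℕ)) /
        ∑ t' : Fin P → Fin 2, nu T δ A m (m - (k+1)) (fun i => 2 * c i + (t' i : ℕ))) := by
    intro t
    simp only [Mw, hpar']
  rw [Finset.sum_congr rfl (fun t _ => hstep t)]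
  rw [← Finset.mul_sum, ← Finset.sum_div]
  set S := ∑ t' : Fin P → Fin 2, nu T δ A m (m - (k+1)) (fun i => 2 * c i + (t' i : ℕ)) with hS
  have hS0 : 0 ≤ S := Finset.sum_nonneg fun t _ => nu_nonneg hT _ _
  rcases eq_or_lt_of_le hS0 with hSz | hSpos
  · -- S = 0 : Mw k c = 0 too
    have hMc : Mw T δ A m k c = 0 := by
      have h1 := Mw_le_nu (A := A) (δ := δ) hT k (Nat.le_of_succ_le hk) c
      have hmk : m - k = (m - (k+1)) + 1 := by omega
      rw [hmk] at h1
      simp only [nu] at h1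
      rw [← hS, ← hSz] at h1
      have h2 := Mw_nonneg hT (A := A) (m := m) (δ := δ) k c
      have : Mw T δ A m k c ≤ 0 := le_trans h1 (min_le_right _ _)
      linarith
    rw [hMc, ← hSz]
    simp
  · rw [div_self (ne_of_gt hSpos), mul_one]


lemma nat_div_eq_iff {d n c : ℕ} (hd : 0 < d) : n / d = c ↔ d * c ≤ n ∧ n < d * c + d := by
  constructor
  · rintro rfl
    refine ⟨?_, ?_⟩
    · rw [mul_comm]; exact Nat.div_mul_le_self n d
    · have h1 : d * (n / d) + n % d = n := Nat.div_add_mod n d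
      have h2 : n % d < d := Nat.mod_lt n hd
      calc n = d * (n / d) + n % d := h1.symm
        _ < d * (n / d) + d := by exact Nat.add_lt_add_left h2 _
  · rintro ⟨h1, h2⟩
    refine Nat.div_eq_of_lt_le ?_ ?_
    · rw [mul_comm]; exact h1
    · calc n < d * c + d := h2
        _ = (c + 1) * d := by ring

def desc (j : ℕ) (c : Fin P → ℕ) : Finset (Fin P → ℕ) :=
  Fintype.piFinset (fun i => Finset.Ico (2 ^ j * c i) (2 ^ j * c i + 2 ^ j))

lemma mem_desc {j : ℕ} {c z : Fin P → ℕ} :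
    z ∈ desc j c ↔ ∀ i, z i / 2 ^ j = c i := by
  simp only [desc, Fintype.mem_piFinset, Finset.mem_Ico]
  exact forall_congr' fun i => (nat_div_eq_iff (pow_pos two_pos j)).symm

lemma desc_zero (c : Fin P → ℕ) : desc 0 c = {c} := by
  ext z
  simp only [mem_desc, pow_zero, Nat.div_one, Finset.mem_singleton, funext_iff]

lemma desc_succ (j : ℕ) (c : Fin P → ℕ) :
    desc (j+1) c = (Finset.univ : Finset (Fin P → Fin 2)).biUnion
      (fun t => desc j (fun i => 2 * c i + (t i : ℕ))) := by
  ext z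
  simp only [Finset.mem_biUnion, Finset.mem_univ, true_and, mem_desc]
  have key : ∀ i : Fin P, z i / 2 ^ (j+1) = (z i / 2 ^ j) / 2 := by
    intro i; rw [Nat.div_div_eq_div_mul, ← pow_succ]
  constructor
  · intro h
    refine ⟨fun i => ⟨(z i / 2 ^ j) % 2, Nat.mod_lt _ two_pos⟩, fun i => ?_⟩
    have h1 := h i
    rw [key i] at h1
    simp only []
    omega
  · rintro ⟨t, ht⟩ i
    rw [key i, ht i]
    have := (t i).isLt
    omega

lemma desc_pairwise_disjoint (j : ℕ) (c : Fin P → ℕ) :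
    ((Finset.univ : Finset (Fin P → Fin 2)) : Set (Fin P → Fin 2)).PairwiseDisjoint
      (fun t : Fin P → Fin 2 => desc j (fun i => 2 * c i + (t i : ℕ))) := by
  intro t _ t' _ hne
  simp only [Function.onFun]
  rw [Finset.disjoint_left]
  intro z hz hz'
  rw [mem_desc] at hz hz'
  refine hne (funext fun i => ?_)
  have h1 := hz i
  have h2 := hz' i
  rw [h1] at h2
  have := (t i).isLt
  have := (t' i).isLt
  exact Fin.ext (by omega)

lemma Mw_desc_sum (hT : 0 < T) :
    ∀ (j k : ℕ), k + j ≤ m → ∀ c : Fin P → ℕ,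
      ∑ z ∈ desc j c, Mw T δ A m (k + j) z = Mw T δ A m k c := by
  intro j
  induction j with
  | zero => intro k _ c; rw [desc_zero]; simp
  | succ j ih =>
      intro k hk c
      rw [desc_succ, Finset.sum_biUnion (desc_pairwise_disjoint j c)]
      have hterm : ∀ t : Fin P → Fin 2,
          ∑ z ∈ desc j (fun i => 2 * c i + (t i : ℕ)), Mw T δ A m (k + (j+1)) z
            = Mw T δ A m (k+1) (fun i => 2 * c i + (t i : ℕ)) := by
        intro t
        have harith : k + (j+1) = (k+1) + j := by omega
        rw [harith]
        exact ih (k+1) (by omega) _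
      rw [Finset.sum_congr rfl (fun t _ => hterm t)]
      exact Mw_children_sum hT k (by omega) c


lemma hc_empty (hδ : 0 < δ) : hausdorffContent δ (∅ : Set (EuclideanSpace ℝ (Fin P))) = 0 := by
  refine le_antisymm ?_ (zero_le)
  refine le_trans (hc_le_diam_pow hδ _) ?_
  rw [diam_empty_pow hδ]

lemma hc_inter_cube_le (hδ : 0 < δ) (hT : 0 < T) (k : ℕ) (z : Fin P → ℕ) :
    hausdorffContent δ (A ∩ cube T k z) ≤ ENNReal.ofReal (Dk P T δ k) := by
  refine le_trans (hc_le_diam_pow hδ _) ?_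
  have hdiam : EMetric.diam (A ∩ cube T k z) ≤ ENNReal.ofReal (Real.sqrt P * side T k) := by
    refine EMetric.diam_le fun x hx y hy => ?_
    rw [edist_dist]
    exact ENNReal.ofReal_le_ofReal (dist_le_of_mem_cube hT hx.2 hy.2)
  calc EMetric.diam (A ∩ cube T k z) ^ δ
      ≤ (ENNReal.ofReal (Real.sqrt P * side T k)) ^ δ := ENNReal.rpow_le_rpow hdiam hδ.le
    _ = ENNReal.ofReal (Dk P T δ k) := by
        rw [ENNReal.ofReal_rpow_of_nonneg
          (mul_nonneg (Real.sqrt_nonneg _) (side_pos hT k).le) hδ.le]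
        rfl

lemma hc_inter_cube_ne_top (hδ : 0 < δ) (hT : 0 < T) (k : ℕ) (z : Fin P → ℕ) :
    hausdorffContent δ (A ∩ cube T k z) ≠ ⊤ :=
  ne_top_of_le_ne_top ENNReal.ofReal_ne_top (hc_inter_cube_le hδ hT k z)

lemma nu_lower (hδ : 0 < δ) (hT : 0 < T) : ∀ j, j ≤ m → ∀ c : Fin P → ℕ,
    (hausdorffContent δ (A ∩ cube T (m - j) c)).toReal ≤ nu T δ A m j c := by
  intro j
  induction j with
  | zero =>
      intro _ c
      simp only [nu, Nat.sub_zero]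
      split
      · exact ENNReal.toReal_le_of_le_ofReal (Dk_nonneg hT m) (hc_inter_cube_le hδ hT m c)
      · rename_i h
        rw [Set.not_nonempty_iff_eq_empty] at h
        rw [h, hc_empty hδ]
        simp
  | succ j ih =>
      intro hj c
      simp only [nu]
      refine le_min ?_ ?_
      · exact ENNReal.toReal_le_of_le_ofReal (Dk_nonneg hT _) (hc_inter_cube_le hδ hT _ c)
      · have hlvl : m - (j+1) + 1 = m - j := by omega
        have hcover : A ∩ cube T (m - (j+1)) c ⊆
            ⋃ t : Fin P → Fin 2, (A ∩ cube T (m - j) (fun i => 2 * c i + (t i : ℕ))) := by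
          intro x hx
          have h2 := cube_cover_children hT (k := m - (j+1)) c hx.2
          rw [hlvl] at h2
          obtain ⟨t, ht⟩ := Set.mem_iUnion.1 h2
          exact Set.mem_iUnion.2 ⟨t, hx.1, ht⟩
        have h1 : hausdorffContent δ (A ∩ cube T (m - (j+1)) c) ≤
            ∑ t : Fin P → Fin 2,
              hausdorffContent δ (A ∩ cube T (m - j) (fun i => 2 * c i + (t i : ℕ))) := by
          refine le_trans (hc_mono hδ hcover) ?_
          refine le_trans (hc_iUnion_le hδ _) ?_
          rw [tsum_fintype]
        have hne : ∀ t : Fin P → Fin 2,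
            hausdorffContent δ (A ∩ cube T (m - j) (fun i => 2 * c i + (t i : ℕ))) ≠ ⊤ :=
          fun t => hc_inter_cube_ne_top hδ hT _ _
        calc (hausdorffContent δ (A ∩ cube T (m - (j+1)) c)).toReal
            ≤ (∑ t : Fin P → Fin 2,
                hausdorffContent δ (A ∩ cube T (m - j) (fun i => 2 * c i + (t i : ℕ)))).toReal := by
              refine ENNReal.toReal_mono ?_ h1
              rw [ne_eq, ENNReal.sum_eq_top]
              push_neg
              exact fun t _ => hne t
          _ = ∑ t : Fin P → Fin 2,
                (hausdorffContent δ (A ∩ cube T (m - j) (fun i => 2 * c i + (t i : ℕ)))).toReal :=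
              ENNReal.toReal_sum (fun t _ => hne t)
          _ ≤ ∑ t : Fin P → Fin 2, nu T δ A m j (fun i => 2 * c i + (t i : ℕ)) :=
              Finset.sum_le_sum fun t _ => ih (by omega) _

lemma total_mass (hδ : 0 < δ) (hT : 0 < T) (hA : A ⊆ cube T 0 (fun _ => 0)) :
    (hausdorffContent δ A).toReal ≤ ∑ z ∈ desc m (fun _ => 0), Mw T δ A m m z := by
  have h1 : ∑ z ∈ desc m (fun _ => 0), Mw T δ A m m z = Mw T δ A m 0 (fun _ => 0) := by
    have := Mw_desc_sum (A := A) (δ := δ) (m := m) hT m 0 (by omega) (fun _ => 0)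
    simpa using this
  rw [h1]
  have h2 : Mw T δ A m 0 (fun _ => 0) = nu T δ A m m (fun _ => 0) := by simp [Mw]
  rw [h2]
  have h3 := nu_lower (A := A) hδ hT m le_rfl (fun _ => 0)
  rw [Nat.sub_self] at h3
  rwa [Set.inter_eq_self_of_subset_left hA] at h3


/-- chosen point of `A` in a small cube (or `0`). -/
noncomputable def pt (T : ℝ) (A : Set (EuclideanSpace ℝ (Fin P))) (m : ℕ)
    (z : Fin P → ℕ) : EuclideanSpace ℝ (Fin P) :=
  if h : (A ∩ cube T m z).Nonempty then h.choose else 0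

lemma pt_mem {z : Fin P → ℕ} (h : (A ∩ cube T m z).Nonempty) :
    pt T A m z ∈ A ∩ cube T m z := by
  rw [pt, dif_pos h]
  exact h.choose_spec

lemma nonempty_of_Mw_ne_zero (hT : 0 < T) {z : Fin P → ℕ}
    (h : Mw T δ A m m z ≠ 0) : (A ∩ cube T m z).Nonempty := by
  by_contra hne
  refine h (le_antisymm ?_ (Mw_nonneg hT m z))
  have h1 := Mw_le_nu (A := A) (δ := δ) hT m le_rfl z
  rw [Nat.sub_self] at h1
  simp only [nu] at h1
  rw [if_neg hne] at h1
  exact h1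

lemma desc_disjoint_of_ne {j : ℕ} {c c' : Fin P → ℕ} (h : c ≠ c') :
    Disjoint (desc j c) (desc j c') := by
  rw [Finset.disjoint_left]
  intro z hz hz'
  rw [mem_desc] at hz hz'
  exact h (funext fun i => (hz i).symm.trans (hz' i))

lemma ball_mass (hδ : 0 < δ) (hT : 0 < T) (y : EuclideanSpace ℝ (Fin P)) (r : ℝ)
    (hr : side T m ≤ r) :
    ∑ z ∈ (desc m (fun _ => 0)).filter
        (fun z => (A ∩ cube T m z).Nonempty ∧ dist (pt T A m z) y ≤ r),
      Mw T δ A m m z ≤ (4:ℝ)^P * (2*Real.sqrt P)^δ * r ^ δ := by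
  have hr0 : 0 < r := lt_of_lt_of_le (side_pos hT m) hr
  have hsqP : (0:ℝ) ≤ Real.sqrt P := Real.sqrt_nonneg _
  have h4P : (1:ℝ) ≤ 4^P := one_le_pow₀ (by norm_num)
  by_cases hcase : 2*T < r
  · -- huge radius : bound by total mass
    calc ∑ z ∈ (desc m (fun _ => 0)).filter
          (fun z => (A ∩ cube T m z).Nonempty ∧ dist (pt T A m z) y ≤ r), Mw T δ A m m z
        ≤ ∑ z ∈ desc m (fun _ => 0), Mw T δ A m m z :=
          Finset.sum_le_sum_of_subset_of_nonneg (Finset.filter_subset _ _)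
            (fun z _ _ => Mw_nonneg hT m z)
      _ = Mw T δ A m 0 (fun _ => 0) := by
          have := Mw_desc_sum (A := A) (δ := δ) (m := m) hT m 0 (by omega) (fun _ => 0)
          simpa using this
      _ ≤ Dk P T δ 0 := by
          refine le_trans (Mw_le_nu (A := A) (δ := δ) hT 0 (Nat.zero_le m) _) ?_
          have := nu_le_Dk (A := A) (δ := δ) (m := m) hT m (fun _ => (0:ℕ))
          rw [Nat.sub_self] at this
          have h0 : m - 0 = m := by omega
          rw [h0]
          exact this
      _ ≤ (4:ℝ)^P * (2*Real.sqrt P)^δ * r ^ δ := by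
          have h1 : Dk P T δ 0 ≤ (Real.sqrt P * r) ^ δ := by
            unfold Dk side
            refine Real.rpow_le_rpow (by positivity) ?_ hδ.le
            rw [pow_zero, div_one]
            exact mul_le_mul_of_nonneg_left hcase.le hsqP
          refine le_trans h1 ?_
          rw [Real.mul_rpow hsqP hr0.le]
          refine mul_le_mul_of_nonneg_right ?_ (Real.rpow_nonneg hr0.le δ)
          calc (Real.sqrt P) ^ δ ≤ (2*Real.sqrt P) ^ δ :=
                Real.rpow_le_rpow hsqP (by linarith) hδ.le
            _ ≤ (4:ℝ)^P * (2*Real.sqrt P)^δ := le_mul_of_one_le_left (by positivity) h4P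
  · -- moderate radius : count cubes at a comparable level
    push_neg at hcase  -- r ≤ 2*T
    set n : ℕ := ⌊2*T/r⌋₊ with hn
    have hn1 : 1 ≤ n := by
      rw [hn, Nat.one_le_floor_iff, le_div_iff₀ hr0]
      linarith
    set k : ℕ := Nat.log 2 n with hk
    have h2k : (2:ℝ)^k ≤ 2*T/r := by
      calc ((2:ℝ))^k = ((2^k : ℕ) : ℝ) := by push_cast; ring
        _ ≤ (n:ℝ) := by exact_mod_cast Nat.pow_log_le_self 2 (by omega)
        _ ≤ 2*T/r := Nat.floor_le (by positivity)
    have h2k' : 2*T/r < (2:ℝ)^(k+1) := by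
      calc 2*T/r < (n:ℝ) + 1 := Nat.lt_floor_add_one _
        _ ≤ ((2^(k+1) : ℕ) : ℝ) := by
            exact_mod_cast Nat.lt_pow_succ_log_self (by norm_num) n
        _ = (2:ℝ)^(k+1) := by push_cast; ring
    have hkm : k ≤ m := by
      have hmono : (2:ℝ)^k ≤ (2:ℝ)^m := by
        calc (2:ℝ)^k ≤ 2*T/r := h2k
          _ ≤ 2*T/side T m :=
              div_le_div_of_nonneg_left (by linarith) (side_pos hT m) hr
          _ = (2:ℝ)^m := by
              unfold side
              field_simp
      exact_mod_cast Nat.pow_le_pow_iff_right (by norm_num : 1 < 2) |>.1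
        (by exact_mod_cast hmono)
    have hlk_pos := side_pos hT k
    have hrlk : r ≤ side T k := by
      unfold side
      rw [le_div_iff₀ (by positivity)]
      have h5 := (le_div_iff₀ hr0).1 h2k
      nlinarith [h5]
    have hlk2r : side T k ≤ 2*r := by
      unfold side
      rw [div_le_iff₀ (by positivity)]
      have h3 := (div_lt_iff₀ hr0).1 h2k'
      rw [pow_succ] at h3
      nlinarith [h3]
    set j0 := m - k with hj0
    have hkj : k + j0 = m := by omega
    set lo : Fin P → ℕ := fun i => ⌊(y i + T - r)/side T k⌋₊ with hlo
    set Nb : Finset (Fin P → ℕ) := Fintype.piFinset (fun i => Finset.Icc (lo i) (lo i + 3))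
      with hNb
    have hsub : (desc m (fun _ => 0)).filter
          (fun z => (A ∩ cube T m z).Nonempty ∧ dist (pt T A m z) y ≤ r)
        ⊆ Nb.biUnion (fun c => desc j0 c) := by
      intro z hz
      rw [Finset.mem_filter] at hz
      obtain ⟨hzd, hzne, hzdist⟩ := hz
      set c : Fin P → ℕ := fun i => z i / 2 ^ j0 with hc
      have hzc : z ∈ desc j0 c := mem_desc.2 fun i => rfl
      refine Finset.mem_biUnion.2 ⟨c, ?_, hzc⟩
      have hx := pt_mem hzne
      have hxk : pt T A m z ∈ cube T k c := by
        have h5 := cube_subset_anc hT (k := k) (j := j0) z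
        rw [hkj] at h5
        exact h5 hx.2
      rw [Fintype.mem_piFinset]
      intro i
      rw [Finset.mem_Icc]
      have hb := (mem_cube_iff hT).1 hxk i
      have habs : |pt T A m z i - y i| ≤ r :=
        le_trans (abs_coord_le_dist i) hzdist
      rw [abs_le] at habs
      constructor
      · -- lo i ≤ c i
        by_cases hneg : (y i + T - r)/side T k < 0
        · have hl0 : lo i = 0 := Nat.floor_of_nonpos hneg.le
          omega
        · push_neg at hneg
          have h6 : (lo i : ℝ) ≤ (y i + T - r)/side T k := Nat.floor_le hneg
          have h7 : (y i + T - r)/side T k < (c i : ℝ) + 1 := by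
            rw [div_lt_iff₀ hlk_pos]
            nlinarith [hb.2, habs.1]
          have h8 : (lo i : ℝ) < (c i : ℝ) + 1 := lt_of_le_of_lt h6 h7
          have : lo i < c i + 1 := by exact_mod_cast h8
          omega
      · -- c i ≤ lo i + 3
        have h9 : (c i : ℝ) * side T k ≤ y i + T + r := by nlinarith [hb.1, habs.2]
        have hA1 : (c i : ℝ) ≤ (y i + T + r)/side T k := (le_div_iff₀ hlk_pos).2 h9
        have hA2 : (y i + T + r)/side T k ≤ (y i + T - r)/side T k + 2 := by
          have hd : (y i + T + r)/side T k - (y i + T - r)/side T k = 2*r/side T k := by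
            field_simp
            ring
          have hd2 : 2*r/side T k ≤ 2 := by
            rw [div_le_iff₀ hlk_pos]
            linarith
          linarith
        have h11 : (y i + T - r)/side T k < (lo i : ℝ) + 1 := Nat.lt_floor_add_one _
        have h12 : (c i : ℝ) < (lo i : ℝ) + 3 := by linarith
        have : c i < lo i + 3 := by exact_mod_cast h12
        omega
    have hNbcard : Nb.card = 4^P := by
      rw [hNb, Fintype.card_piFinset]
      have hic : ∀ i, (Finset.Icc (lo i) (lo i + 3)).card = 4 := by
        intro i; rw [Nat.card_Icc]; omega
      rw [Finset.prod_congr rfl (fun i _ => hic i)]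
      simp
    have hdisjNb : ((Nb : Set (Fin P → ℕ))).PairwiseDisjoint (fun c => desc j0 c) :=
      fun c _ c' _ hne => by
        simp only [Function.onFun]
        exact desc_disjoint_of_ne hne
    calc ∑ z ∈ (desc m (fun _ => 0)).filter
          (fun z => (A ∩ cube T m z).Nonempty ∧ dist (pt T A m z) y ≤ r), Mw T δ A m m z
        ≤ ∑ z ∈ Nb.biUnion (fun c => desc j0 c), Mw T δ A m m z :=
          Finset.sum_le_sum_of_subset_of_nonneg hsub (fun z _ _ => Mw_nonneg hT m z)
      _ = ∑ c ∈ Nb, ∑ z ∈ desc j0 c, Mw T δ A m m z := Finset.sum_biUnion hdisjNb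
      _ = ∑ c ∈ Nb, Mw T δ A m k c := by
          refine Finset.sum_congr rfl fun c _ => ?_
          have := Mw_desc_sum (A := A) (δ := δ) (m := m) hT j0 k (by omega) c
          rw [hkj] at this
          exact this
      _ ≤ ∑ c ∈ Nb, Dk P T δ k := by
          refine Finset.sum_le_sum fun c _ => ?_
          refine le_trans (Mw_le_nu (A := A) (δ := δ) hT k hkm c) ?_
          have := nu_le_Dk (A := A) (δ := δ) (m := m) hT (m - k) c
          have hmk : m - (m - k) = k := by omega
          rw [hmk] at this
          exact this
      _ = (4:ℝ)^P * Dk P T δ k := by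
          rw [Finset.sum_const, hNbcard]
          simp [nsmul_eq_mul]
      _ ≤ (4:ℝ)^P * (2*Real.sqrt P)^δ * r ^ δ := by
          rw [mul_assoc]
          refine mul_le_mul_of_nonneg_left ?_ (by positivity)
          have hD : Dk P T δ k ≤ ((2*Real.sqrt P) * r) ^ δ := by
            unfold Dk
            refine Real.rpow_le_rpow (mul_nonneg hsqP hlk_pos.le) ?_ hδ.le
            nlinarith [hlk2r, hsqP, hr0]
          refine le_trans hD ?_
          rw [Real.mul_rpow (by positivity) hr0.le]


lemma geom_bound {x : ℝ} (hx : 0 ≤ x) (h1 : x < 1) (n : ℕ) :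
    ∑ i ∈ Finset.range n, x ^ i ≤ (1-x)⁻¹ := by
  refine le_trans (Summable.sum_le_tsum (Finset.range n) (fun i _ => pow_nonneg hx i)
    (summable_geometric_of_lt_one hx h1)) ?_
  rw [tsum_geometric_of_lt_one hx h1]

/-- annulus decomposition bound : the weighted Riesz sum over points at distance `> r`
from `y` is at most `K₀ · 2^δ · (1-2^(δ-s))⁻¹ · r^(δ-s)`. -/
lemma annuli (hδ : 0 < δ) {s : ℝ} (hs : δ < s) (hT : 0 < T)
    (y : EuclideanSpace ℝ (Fin P)) (r : ℝ) (hrs : side T m ≤ r)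
    (F : Finset (Fin P → ℕ)) (hF : F ⊆ desc m (fun _ => 0))
    (hFne : ∀ z ∈ F, (A ∩ cube T m z).Nonempty)
    (hFdist : ∀ z ∈ F, r < dist (pt T A m z) y) :
    ∑ z ∈ F, Mw T δ A m m z * dist (pt T A m z) y ^ (-s) ≤
      ((4:ℝ)^P * (2*Real.sqrt P)^δ) * 2^δ * (1-2^(δ-s))⁻¹ * r^(δ-s) := by
  have hr0 : 0 < r := lt_of_lt_of_le (side_pos hT m) hrs
  set K0 : ℝ := (4:ℝ)^P * (2*Real.sqrt P)^δ with hK0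
  have hK0nn : 0 ≤ K0 := by positivity
  set κ : (Fin P → ℕ) → ℕ := fun z => Nat.log 2 ⌊dist (pt T A m z) y / r⌋₊ with hκ
  set Kmax : ℕ := (F.sup κ) + 1 with hKmax
  have hκmem : ∀ z ∈ F, κ z ∈ Finset.range Kmax :=
    fun z hz => Finset.mem_range.2 (Nat.lt_succ_of_le (Finset.le_sup hz))
  rw [← Finset.sum_fiberwise_of_maps_to hκmem
    (fun z => Mw T δ A m m z * dist (pt T A m z) y ^ (-s))]
  have hfiber : ∀ k ∈ Finset.range Kmax,
      ∑ z ∈ F.filter (fun z => κ z = k), Mw T δ A m m z * dist (pt T A m z) y ^ (-s) ≤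
        (K0 * 2^δ * (2:ℝ)^((δ-s)*k)) * r^(δ-s) := by
    intro k _
    have hlow : ∀ z ∈ F.filter (fun z => κ z = k), (2:ℝ)^k * r ≤ dist (pt T A m z) y := by
      intro z hz
      rw [Finset.mem_filter] at hz
      have hzF := hz.1
      have hd := hFdist z hzF
      have hq1 : 1 ≤ ⌊dist (pt T A m z) y / r⌋₊ := by
        rw [Nat.one_le_floor_iff, le_div_iff₀ hr0]
        linarith
      have : ((2:ℝ))^k ≤ ⌊dist (pt T A m z) y / r⌋₊ := by
        rw [← hz.2]
        calc ((2:ℝ))^(κ z) = ((2^(κ z) : ℕ) : ℝ) := by push_cast; ring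
          _ ≤ _ := by exact_mod_cast Nat.pow_log_le_self 2 (by omega)
      have h2 : ((2:ℝ))^k ≤ dist (pt T A m z) y / r :=
        le_trans this (Nat.floor_le (by positivity))
      rw [le_div_iff₀ hr0] at h2
      linarith
    have hhigh : ∀ z ∈ F.filter (fun z => κ z = k),
        dist (pt T A m z) y ≤ 2^(k+1) * r := by
      intro z hz
      rw [Finset.mem_filter] at hz
      have h2 : dist (pt T A m z) y / r < (2:ℝ)^(k+1) := by
        calc dist (pt T A m z) y / r < (⌊dist (pt T A m z) y / r⌋₊ : ℝ) + 1 :=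
              Nat.lt_floor_add_one _
          _ ≤ ((2^(k+1) : ℕ) : ℝ) := by
              rw [← hz.2]
              exact_mod_cast Nat.lt_pow_succ_log_self (by norm_num) _
          _ = (2:ℝ)^(k+1) := by push_cast; ring
      rw [div_lt_iff₀ hr0] at h2
      linarith
    have hpos2k : (0:ℝ) < 2^k * r := by positivity
    calc ∑ z ∈ F.filter (fun z => κ z = k), Mw T δ A m m z * dist (pt T A m z) y ^ (-s)
        ≤ ∑ z ∈ F.filter (fun z => κ z = k), Mw T δ A m m z * ((2:ℝ)^k * r) ^ (-s) := by
          refine Finset.sum_le_sum fun z hz => ?_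
          refine mul_le_mul_of_nonneg_left ?_ (Mw_nonneg hT m z)
          exact Real.rpow_le_rpow_of_nonpos hpos2k (hlow z hz) (by linarith)
      _ = ((2:ℝ)^k * r) ^ (-s) * ∑ z ∈ F.filter (fun z => κ z = k), Mw T δ A m m z := by
          rw [Finset.mul_sum]
          exact Finset.sum_congr rfl fun z _ => mul_comm _ _
      _ ≤ ((2:ℝ)^k * r) ^ (-s) * (K0 * ((2:ℝ)^(k+1) * r) ^ δ) := by
          refine mul_le_mul_of_nonneg_left ?_ (Real.rpow_nonneg hpos2k.le _)
          have hsub2 : F.filter (fun z => κ z = k) ⊆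
              (desc m (fun _ => 0)).filter
                (fun z => (A ∩ cube T m z).Nonempty ∧
                  dist (pt T A m z) y ≤ 2^(k+1) * r) := by
            intro z hz
            rw [Finset.mem_filter]
            refine ⟨hF (Finset.mem_filter.1 hz).1, hFne z (Finset.mem_filter.1 hz).1,
              hhigh z hz⟩
          refine le_trans (Finset.sum_le_sum_of_subset_of_nonneg hsub2
            (fun z _ _ => Mw_nonneg hT m z)) ?_
          have := ball_mass (A := A) (m := m) hδ hT y (2^(k+1) * r)
            (le_trans hrs (le_mul_of_one_le_left hr0.le (one_le_pow₀ (by norm_num : (1:ℝ) ≤ 2))))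
          exact this
      _ = (K0 * 2^δ * (2:ℝ)^((δ-s)*k)) * r^(δ-s) := by
          rw [Real.mul_rpow (by positivity) hr0.le, Real.mul_rpow (by positivity) hr0.le]
          rw [← Real.rpow_natCast (2:ℝ) k, ← Real.rpow_natCast (2:ℝ) (k+1)]
          rw [← Real.rpow_mul (by norm_num : (0:ℝ) ≤ 2),
              ← Real.rpow_mul (by norm_num : (0:ℝ) ≤ 2)]
          have e1 : (2:ℝ) ^ ((k:ℝ) * -s) * (2:ℝ) ^ (((k+1 : ℕ):ℝ) * δ) =
              2 ^ δ * 2 ^ ((δ - s) * (k:ℝ)) := by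
            rw [← Real.rpow_add (by norm_num : (0:ℝ) < 2),
                ← Real.rpow_add (by norm_num : (0:ℝ) < 2)]
            congr 1
            push_cast
            ring
          have e2 : r ^ (-s) * r ^ δ = r ^ (δ - s) := by
            rw [← Real.rpow_add hr0]
            congr 1
            ring
          calc (2:ℝ) ^ ((k:ℝ) * -s) * r ^ (-s) * (K0 * ((2:ℝ) ^ (((k+1:ℕ):ℝ) * δ) * r ^ δ))
              = ((2:ℝ) ^ ((k:ℝ) * -s) * (2:ℝ) ^ (((k+1:ℕ):ℝ) * δ)) * (r ^ (-s) * r ^ δ) * K0 := by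
                ring
            _ = K0 * 2 ^ δ * 2 ^ ((δ - s) * (k:ℝ)) * r ^ (δ - s) := by rw [e1, e2]; ring
  refine le_trans (Finset.sum_le_sum hfiber) ?_
  have hx1 : (2:ℝ)^(δ-s) < 1 :=
    Real.rpow_lt_one_of_one_lt_of_neg (by norm_num) (by linarith)
  have hx0 : (0:ℝ) ≤ (2:ℝ)^(δ-s) := Real.rpow_nonneg (by norm_num) _
  have hrp : 0 ≤ r ^ (δ-s) := Real.rpow_nonneg hr0.le _
  calc ∑ k ∈ Finset.range Kmax, (K0 * 2^δ * (2:ℝ)^((δ-s)*k)) * r^(δ-s)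
      = (K0 * 2^δ * r^(δ-s)) * ∑ k ∈ Finset.range Kmax, ((2:ℝ)^(δ-s))^k := by
        rw [Finset.mul_sum]
        refine Finset.sum_congr rfl fun k _ => ?_
        rw [← Real.rpow_natCast ((2:ℝ)^(δ-s)) k, ← Real.rpow_mul (by norm_num : (0:ℝ) ≤ 2)]
        ring
    _ ≤ (K0 * 2^δ * r^(δ-s)) * (1-(2:ℝ)^(δ-s))⁻¹ := by
        refine mul_le_mul_of_nonneg_left (geom_bound hx0 hx1 Kmax) ?_
        positivity
    _ = K0 * 2^δ * (1-2^(δ-s))⁻¹ * r^(δ-s) := by ring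


lemma sum_union_le_aux {β : Type*} [DecidableEq β] (s₁ s₂ : Finset β) (f : β → ℝ)
    (hf : ∀ b, 0 ≤ f b) : ∑ x ∈ s₁ ∪ s₂, f x ≤ ∑ x ∈ s₁, f x + ∑ x ∈ s₂, f x := by
  rw [← Finset.union_sdiff_self_eq_union, Finset.sum_union Finset.disjoint_sdiff]
  exact add_le_add le_rfl (Finset.sum_le_sum_of_subset_of_nonneg (Finset.sdiff_subset)
    (fun x _ _ => hf x))

lemma sum_biUnion_le_aux {α β : Type*} [DecidableEq β] (s : Finset α) (t : α → Finset β)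
    (f : β → ℝ) (hf : ∀ b, 0 ≤ f b) :
    ∑ x ∈ s.biUnion t, f x ≤ ∑ a ∈ s, ∑ x ∈ t a, f x := by
  classical
  induction s using Finset.induction_on with
  | empty => simp
  | insert a s' h ih =>
      rw [Finset.biUnion_insert, Finset.sum_insert h]
      exact le_trans (sum_union_le_aux _ _ f hf) (add_le_add le_rfl ih)

lemma key_point (hδ : 0 < δ) {s : ℝ} (hs : δ < s) (hT : 0 < T)
    (hA : A ⊆ cube T 0 (fun _ => 0))
    (hH : 0 < (hausdorffContent δ A).toReal) (hP : 0 < P) :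
    ∃ K : ℝ, 0 < K ∧ ∀ n : ℕ, 1 ≤ n → ∀ a : ℕ → EuclideanSpace ℝ (Fin P),
      ∃ x ∈ A, ∑ i ∈ Finset.range n, dist x (a i) ^ (-s) ≤ K * (n:ℝ) ^ (s/δ) := by
  set H := (hausdorffContent δ A).toReal with hHdef
  have hsq : (0:ℝ) < Real.sqrt P := Real.sqrt_pos.2 (by exact_mod_cast hP)
  set K0 : ℝ := (4:ℝ)^P * (2*Real.sqrt P)^δ with hK0def
  have hK0 : 0 < K0 :=
    mul_pos (pow_pos (by norm_num) P) (Real.rpow_pos_of_pos (by linarith) δ)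
  have hgeom : (0:ℝ) < 1 - (2:ℝ)^(δ-s) := by
    have := Real.rpow_lt_one_of_one_lt_of_neg (by norm_num : (1:ℝ)<2)
      (by linarith : δ - s < 0)
    linarith
  set K1 : ℝ := K0 * 2^δ * (1-2^(δ-s))⁻¹ with hK1def
  have hK1 : 0 < K1 :=
    mul_pos (mul_pos hK0 (Real.rpow_pos_of_pos (by norm_num) δ)) (inv_pos.2 hgeom)
  set K : ℝ := (2*K1/H) * (H/(2*K0)) ^ ((δ-s)/δ) with hKdef
  have hK : 0 < K :=
    mul_pos (by positivity) (Real.rpow_pos_of_pos (by positivity) _)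
  refine ⟨K, hK, ?_⟩
  intro n hn a
  have hn0 : (0:ℝ) < n := by exact_mod_cast hn
  set ρ : ℝ := H/(2*K0*n) with hρdef
  have hρ0 : 0 < ρ := by positivity
  set r : ℝ := ρ ^ δ⁻¹ with hrdef
  have hr0 : 0 < r := Real.rpow_pos_of_pos hρ0 _
  have hrδ : r ^ δ = ρ := by
    rw [hrdef, ← Real.rpow_mul hρ0.le, inv_mul_cancel₀ hδ.ne', Real.rpow_one]
  obtain ⟨m0, hm0⟩ := pow_unbounded_of_one_lt (2*T/r) (one_lt_two)
  have hside : side T m0 ≤ r := by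
    unfold side
    rw [div_le_iff₀ (by positivity)]
    rw [div_lt_iff₀ hr0] at hm0
    linarith
  set W : (Fin P → ℕ) → ℝ := Mw T δ A m0 m0 with hW
  set Sall := desc m0 (fun _ : Fin P => (0:ℕ)) with hSall
  set NEp : (Fin P → ℕ) → Prop := fun z => (A ∩ cube T m0 z).Nonempty with hNEp
  set q : (Fin P → ℕ) → Prop :=
    fun z => ∀ i ∈ Finset.range n, r < dist (pt T A m0 z) (a i) with hq
  set G := (Sall.filter NEp).filter q with hG
  have htot : H ≤ ∑ z ∈ Sall, W z := total_mass hδ hT hA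
  have hfilterNe : ∑ z ∈ Sall.filter NEp, W z = ∑ z ∈ Sall, W z :=
    Finset.sum_filter_of_ne (fun z _ hWz => nonempty_of_Mw_ne_zero hT hWz)
  have hsplit : ∑ z ∈ G, W z + ∑ z ∈ (Sall.filter NEp).filter (fun z => ¬ q z), W z
      = ∑ z ∈ Sall.filter NEp, W z := Finset.sum_filter_add_sum_filter_not _ _ _
  -- bad set mass
  have hbad : ∑ z ∈ (Sall.filter NEp).filter (fun z => ¬ q z), W z ≤ H/2 := by
    have hsub : (Sall.filter NEp).filter (fun z => ¬ q z) ⊆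
        (Finset.range n).biUnion (fun i => Sall.filter
          (fun z => NEp z ∧ dist (pt T A m0 z) (a i) ≤ r)) := by
      intro z hz
      rw [Finset.mem_filter] at hz
      obtain ⟨hz1, hz2⟩ := hz
      rw [Finset.mem_filter] at hz1
      have hz2' : ∃ i ∈ Finset.range n, dist (pt T A m0 z) (a i) ≤ r := by
        by_contra hno
        push_neg at hno
        exact hz2 (fun i hi => hno i hi)
      obtain ⟨i, hi, hdist⟩ := hz2'
      exact Finset.mem_biUnion.2 ⟨i, hi, Finset.mem_filter.2 ⟨hz1.1, hz1.2, hdist⟩⟩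
    refine le_trans (Finset.sum_le_sum_of_subset_of_nonneg hsub
      (fun z _ _ => Mw_nonneg hT m0 z)) ?_
    refine le_trans (sum_biUnion_le_aux _ _ _ (fun z => Mw_nonneg hT m0 z)) ?_
    have hb : ∀ i ∈ Finset.range n,
        ∑ z ∈ Sall.filter (fun z => NEp z ∧ dist (pt T A m0 z) (a i) ≤ r), W z
          ≤ K0 * r ^ δ := by
      intro i _
      have := ball_mass (A := A) (m := m0) hδ hT (a i) r hside
      calc ∑ z ∈ Sall.filter (fun z => NEp z ∧ dist (pt T A m0 z) (a i) ≤ r), W z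
          ≤ (4:ℝ)^P * (2*Real.sqrt P)^δ * r ^ δ := this
        _ = K0 * r ^ δ := by rw [hK0def]
    refine le_trans (Finset.sum_le_sum hb) ?_
    rw [Finset.sum_const, Finset.card_range, nsmul_eq_mul, hrδ, hρdef]
    refine le_of_eq ?_
    field_simp [hK0.ne', hn0.ne']
    all_goals ring
  have hGmass : H/2 ≤ ∑ z ∈ G, W z := by linarith [htot, hfilterNe, hsplit, hbad]
  -- existence of a nonzero-weight good cube
  have hGex : ∃ z ∈ G, W z ≠ 0 := by
    by_contra hcon
    push_neg at hcon
    have : ∑ z ∈ G, W z = 0 := Finset.sum_eq_zero hcon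
    rw [this] at hGmass
    linarith
  -- weighted Riesz sum over the good set
  have hGbound : ∑ z ∈ G, W z * (∑ i ∈ Finset.range n, dist (pt T A m0 z) (a i) ^ (-s))
      ≤ n * (K1 * r^(δ-s)) := by
    have hswap : ∑ z ∈ G, W z * (∑ i ∈ Finset.range n, dist (pt T A m0 z) (a i) ^ (-s))
        = ∑ i ∈ Finset.range n, ∑ z ∈ G, W z * dist (pt T A m0 z) (a i) ^ (-s) := by
      rw [Finset.sum_comm]
      exact Finset.sum_congr rfl fun z _ => Finset.mul_sum _ _ _
    rw [hswap]
    have hper : ∀ i ∈ Finset.range n,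
        ∑ z ∈ G, W z * dist (pt T A m0 z) (a i) ^ (-s) ≤ K1 * r^(δ-s) := by
      intro i hi
      have hGsub : G ⊆ Sall := le_trans (Finset.filter_subset _ _) (Finset.filter_subset _ _)
      have h1 := annuli (A := A) (m := m0) hδ hs hT (a i) r hside G hGsub
        (fun z hz => (Finset.mem_filter.1 ((Finset.filter_subset _ _) hz)).2)
        (fun z hz => (Finset.mem_filter.1 hz).2 i hi)
      calc ∑ z ∈ G, W z * dist (pt T A m0 z) (a i) ^ (-s)
          ≤ (4:ℝ)^P * (2*Real.sqrt P)^δ * 2^δ * (1-2^(δ-s))⁻¹ * r^(δ-s) := h1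
        _ = K1 * r^(δ-s) := by rw [hK1def, hK0def]; all_goals ring
    refine le_trans (Finset.sum_le_sum hper) ?_
    rw [Finset.sum_const, Finset.card_range, nsmul_eq_mul]
  -- conclude by contradiction / averaging
  by_contra hcon
  push_neg at hcon
  have hstrict : (K * (n:ℝ)^(s/δ)) * ∑ z ∈ G, W z <
      ∑ z ∈ G, W z * (∑ i ∈ Finset.range n, dist (pt T A m0 z) (a i) ^ (-s)) := by
    rw [Finset.mul_sum]
    obtain ⟨z0, hz0G, hz0W⟩ := hGex
    refine Finset.sum_lt_sum (fun z hz => ?_) ⟨z0, hz0G, ?_⟩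
    · rcases eq_or_ne (W z) 0 with hWz | hWz
      · rw [hWz]; simp
      · have hzA : pt T A m0 z ∈ A :=
          (pt_mem (nonempty_of_Mw_ne_zero hT hWz)).1
        have := hcon _ hzA
        calc K * (n:ℝ)^(s/δ) * W z = W z * (K * (n:ℝ)^(s/δ)) := by ring
          _ ≤ W z * (∑ i ∈ Finset.range n, dist (pt T A m0 z) (a i) ^ (-s)) :=
            mul_le_mul_of_nonneg_left this.le (Mw_nonneg hT m0 z)
    · have hz0A : pt T A m0 z0 ∈ A := (pt_mem (nonempty_of_Mw_ne_zero hT hz0W)).1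
      have hWpos : 0 < W z0 := lt_of_le_of_ne (Mw_nonneg hT m0 z0) (Ne.symm hz0W)
      calc K * (n:ℝ)^(s/δ) * W z0 = W z0 * (K * (n:ℝ)^(s/δ)) := by ring
        _ < W z0 * (∑ i ∈ Finset.range n, dist (pt T A m0 z0) (a i) ^ (-s)) :=
          mul_lt_mul_of_pos_left (hcon _ hz0A) hWpos
  -- exact computation : K * n^(s/δ) * (H/2) = n * (K1 * r^(δ-s))
  have hEq : K * (n:ℝ)^(s/δ) * (H/2) = n * (K1 * r^(δ-s)) := by
    have hre : r^(δ-s) = (H/(2*K0))^((δ-s)/δ) * (n:ℝ)^(-((δ-s)/δ)) := by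
      rw [hrdef, ← Real.rpow_mul hρ0.le]
      have hexp : δ⁻¹ * (δ-s) = (δ-s)/δ := by rw [inv_mul_eq_div]
      rw [hexp]
      have hρ' : ρ = (H/(2*K0)) * ((n:ℝ))⁻¹ := by
        rw [hρdef, ← div_div, div_eq_mul_inv]
      rw [hρ', Real.mul_rpow (by positivity) (by positivity),
        Real.inv_rpow hn0.le, ← Real.rpow_neg hn0.le]
    rw [hre, hKdef]
    have hns : (n:ℝ) * (n:ℝ)^(-((δ-s)/δ)) = (n:ℝ)^(s/δ) := by
      nth_rewrite 1 [← Real.rpow_one (n:ℝ)]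
      rw [← Real.rpow_add hn0]
      congr 1
      field_simp
      all_goals ring
    rw [← hns]
    field_simp
    all_goals ring
  have hfinal : (K * (n:ℝ)^(s/δ)) * (H/2) ≤ (K * (n:ℝ)^(s/δ)) * ∑ z ∈ G, W z :=
    mul_le_mul_of_nonneg_left hGmass (by positivity)
  linarith [hstrict, hGbound, hfinal, hEq]


lemma double_sum (g : ℕ → ℕ → ℝ) (hsym : ∀ i j, g i j = g j i) (N : ℕ) :
    ∑ i ∈ Finset.range N, ∑ j ∈ Finset.range N, (if i = j then 0 else g i j)
      = 2 * ∑ k ∈ Finset.range N, ∑ i ∈ Finset.range k, g k i := by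
  induction N with
  | zero => simp
  | succ N ih =>
      rw [Finset.sum_range_succ, Finset.sum_range_succ
        (fun k => ∑ i ∈ Finset.range k, g k i)]
      have h1 : ∑ j ∈ Finset.range (N+1), (if N = j then 0 else g N j)
          = ∑ j ∈ Finset.range N, g N j := by
        rw [Finset.sum_range_succ, if_pos rfl, add_zero]
        refine Finset.sum_congr rfl fun j hj => ?_
        rw [if_neg]
        intro h
        rw [← h] at hj
        exact absurd (Finset.mem_range.1 hj) (lt_irrefl N)
      have h2 : ∑ i ∈ Finset.range N, ∑ j ∈ Finset.range (N+1), (if i = j then 0 else g i j)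
          = (∑ i ∈ Finset.range N, ∑ j ∈ Finset.range N, (if i = j then 0 else g i j))
            + ∑ i ∈ Finset.range N, g i N := by
        rw [← Finset.sum_add_distrib]
        refine Finset.sum_congr rfl fun i hi => ?_
        rw [Finset.sum_range_succ, if_neg]
        intro h
        rw [h] at hi
        exact absurd (Finset.mem_range.1 hi) (lt_irrefl N)
      have h3 : ∑ i ∈ Finset.range N, g i N = ∑ j ∈ Finset.range N, g N j :=
        Finset.sum_congr rfl fun i _ => hsym i N
      rw [h1, h2, ih, h3]
      ring

end GreedyAux

open GreedyAux

/-- Order-of-growth bound for greedy `(w,s)`-energy sequences, `s > δ`: if `A ⊂ ℝ^P` is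
compact with `H_δ(A) > 0` and `w` is a bounded lower semicontinuous symmetric CPD-type
weight with `w ≤ C` on `A × A`, then there is `M > 0` depending only on `s`, `δ`, `A`,
such that every greedy `(w,s)`-energy sequence on `A` satisfies
`E_s^w(α_N) ≤ M · C · H_δ^∞(A)^{-s/δ} · N^{1+s/δ}` for all `N ≥ 2`. -/
theorem greedy_energy_growth {P : ℕ}
    (A : Set (EuclideanSpace ℝ (Fin P))) (hA : IsCompact A)
    (δ : ℝ) (hδ : 0 < δ) (hδP : δ ≤ P)
    (hHaus : 0 < (MeasureTheory.Measure.hausdorffMeasure δ :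
      Measure (EuclideanSpace ℝ (Fin P))) A)
    (s : ℝ) (hs : δ < s) :
    ∃ M : ℝ, 0 < M ∧
      ∀ (w : EuclideanSpace ℝ (Fin P) → EuclideanSpace ℝ (Fin P) → ℝ)
        (_ : ∀ x y, 0 ≤ w x y) (_ : ∀ x y, w x y = w y x)
        (_ : LowerSemicontinuous fun p :
          EuclideanSpace ℝ (Fin P) × EuclideanSpace ℝ (Fin P) => w p.1 p.2)
        (C : ℝ) (_ : 0 ≤ C) (_ : ∀ x ∈ A, ∀ y ∈ A, w x y ≤ C)
        (a : ℕ → EuclideanSpace ℝ (Fin P)) (_ : ∀ n, a n ∈ A)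
        (_ : ∀ n, ∀ x ∈ A,
          ∑ i ∈ Finset.range n, w (a n) (a i) * ‖a n - a i‖ ^ (-s) ≤
            ∑ i ∈ Finset.range n, w x (a i) * ‖x - a i‖ ^ (-s))
        (N : ℕ) (_ : 2 ≤ N),
        ∑ i ∈ Finset.range N, ∑ j ∈ Finset.range N,
            (if i = j then 0 else w (a i) (a j) * ‖a i - a j‖ ^ (-s)) ≤
          M * C * (hausdorffContent δ A).toReal ^ (-(s / δ)) * (N : ℝ) ^ (1 + s / δ) := by
  classical
  have hcpos : 0 < hausdorffContent δ A := hc_pos hδ hHaus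
  have hfin : hausdorffContent δ A ≠ ⊤ := hc_ne_top hδ hA.isBounded
  have hH : 0 < (hausdorffContent δ A).toReal := ENNReal.toReal_pos (ne_of_gt hcpos) hfin
  have hP : 0 < P := by
    by_contra hP0
    push_neg at hP0
    have hP0' : P = 0 := by omega
    subst hP0'
    have hdiam : EMetric.diam A = 0 := by
      refine le_antisymm ?_ (zero_le)
      refine EMetric.diam_le fun x hx y hy => ?_
      rw [edist_dist]
      have hxy : dist x y = 0 := by
        rw [EuclideanSpace.dist_eq]
        simp
      simp [hxy]
    have := hc_le_diam_pow hδ A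
    rw [hdiam, ENNReal.zero_rpow_of_pos hδ] at this
    exact absurd (le_antisymm this (zero_le)) (ne_of_gt hcpos)
  obtain ⟨R, hR⟩ := hA.isBounded.subset_closedBall 0
  set T : ℝ := |R| + 1 with hTdef
  have hT : 0 < T := by positivity
  have hb : ∀ x ∈ A, ∀ j, |x j| < T := by
    intro x hx j
    have h1 : |x j - (0 : EuclideanSpace ℝ (Fin P)) j| ≤ dist x 0 := abs_coord_le_dist j
    have h2 : dist x 0 ≤ R := Metric.mem_closedBall.1 (hR hx)
    have h3 : (0 : EuclideanSpace ℝ (Fin P)) j = 0 := rfl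
    rw [h3, sub_zero] at h1
    calc |x j| ≤ R := le_trans h1 h2
      _ ≤ |R| := le_abs_self R
      _ < T := by rw [hTdef]; linarith
  have hA0 : A ⊆ cube T 0 (fun _ => 0) := subset_top_cube hT hb
  obtain ⟨K, hKpos, hKey⟩ := key_point (A := A) hδ hs hT hA0 hH hP
  set H : ℝ := (hausdorffContent δ A).toReal with hHdef
  have hsd : (0:ℝ) ≤ s / δ := div_nonneg (by linarith) hδ.le
  refine ⟨2 * K * H ^ (s/δ),
    mul_pos (mul_pos two_pos hKpos) (Real.rpow_pos_of_pos hH _), ?_⟩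
  intro w hw hwsym hwlsc C hC hwC a haA hgreedy N hN
  have hN0 : (0:ℝ) < N := by exact_mod_cast (by omega : 0 < N)
  set g : ℕ → ℕ → ℝ := fun i j => w (a i) (a j) * ‖a i - a j‖ ^ (-s) with hg
  have hgsym : ∀ i j, g i j = g j i := by
    intro i j
    rw [hg]
    simp only
    rw [hwsym, norm_sub_rev]
  have hrow : ∀ k, k < N → ∑ i ∈ Finset.range k, g k i ≤ C * (K * (N:ℝ) ^ (s/δ)) := by
    intro k hk
    rcases Nat.eq_zero_or_pos k with hk0 | hk1
    · subst hk0
      simp only [Finset.range_zero, Finset.sum_empty]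
      exact mul_nonneg hC (mul_nonneg hKpos.le (Real.rpow_nonneg (Nat.cast_nonneg N) _))
    · obtain ⟨x, hxA, hxbound⟩ := hKey k hk1 a
      have hgle : ∑ i ∈ Finset.range k, g k i ≤
          ∑ i ∈ Finset.range k, w x (a i) * ‖x - a i‖ ^ (-s) := hgreedy k x hxA
      refine le_trans hgle ?_
      have hCd : ∑ i ∈ Finset.range k, w x (a i) * ‖x - a i‖ ^ (-s) ≤
          C * ∑ i ∈ Finset.range k, dist x (a i) ^ (-s) := by
        rw [Finset.mul_sum]
        refine Finset.sum_le_sum fun i _ => ?_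
        rw [← dist_eq_norm]
        exact mul_le_mul_of_nonneg_right (hwC x hxA (a i) (haA i))
          (Real.rpow_nonneg dist_nonneg _)
      refine le_trans hCd ?_
      refine mul_le_mul_of_nonneg_left ?_ hC
      refine le_trans hxbound ?_
      refine mul_le_mul_of_nonneg_left ?_ hKpos.le
      exact Real.rpow_le_rpow (Nat.cast_nonneg k) (by exact_mod_cast hk.le) hsd
  have hsum : ∑ k ∈ Finset.range N, ∑ i ∈ Finset.range k, g k i ≤
      (N:ℝ) * (C * (K * (N:ℝ) ^ (s/δ))) := by
    refine le_trans (Finset.sum_le_card_nsmul _ _ _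
      (fun k hk => hrow k (Finset.mem_range.1 hk))) ?_
    rw [Finset.card_range, nsmul_eq_mul]
  have hHpow : H ^ (s/δ) * H ^ (-(s/δ)) = 1 := by
    rw [← Real.rpow_add hH]
    simp
  have hNpow : (N:ℝ) ^ ((1:ℝ) + s/δ) = (N:ℝ) * (N:ℝ) ^ (s/δ) := by
    rw [Real.rpow_add hN0, Real.rpow_one]
  have heq : ∑ i ∈ Finset.range N, ∑ j ∈ Finset.range N,
      (if i = j then 0 else w (a i) (a j) * ‖a i - a j‖ ^ (-s))
        = 2 * ∑ k ∈ Finset.range N, ∑ i ∈ Finset.range k, g k i :=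
    double_sum g hgsym N
  calc ∑ i ∈ Finset.range N, ∑ j ∈ Finset.range N,
      (if i = j then 0 else w (a i) (a j) * ‖a i - a j‖ ^ (-s))
      = 2 * ∑ k ∈ Finset.range N, ∑ i ∈ Finset.range k, g k i := heq
    _ ≤ 2 * ((N:ℝ) * (C * (K * (N:ℝ) ^ (s/δ)))) := by linarith [hsum]
    _ = (H ^ (s/δ) * H ^ (-(s/δ))) * (2 * K * C * ((N:ℝ) * (N:ℝ) ^ (s/δ))) := by
        rw [hHpow]
        ring
    _ = 2 * K * H ^ (s/δ) * C * H ^ (-(s/δ)) * (N:ℝ) ^ ((1:ℝ) + s/δ) := by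
        rw [hNpow]
        ring
end

section
/- Let A ⊂ ℝ^p be compact, s > 0, and w: A×A → [0,∞] bounded symmetric. If a greedy (w,s)-energy sequence (a_n) on A avoids some ball B(a, ε) with a ∈ A, ε > 0, then for every N ≥ 2 the weighted energy satisfies E_s^w(α_N) ≤ (‖w‖/ε^s)·N(N-1). Consequently, if E_s^w(α_N)/N² → ∞ (e.g. if E_s^w(α_N) ≥ C N^{1+s/d} with s > d), the greedy sequence is dense in A. -/
open Filter

/-- If a greedy `(w,s)`-energy sequence on a compact set `A ⊂ ℝ^P` (with `w` bounded by
`C` and symmetric) avoids a ball `B(c,ε)` with `c ∈ A`, then its weighted energy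
satisfies `E_s^w(α_N) ≤ (C/ε^s)·N(N-1)`. Consequently, if `E_s^w(α_N)/N² → ∞`, the
greedy sequence is dense in `A`. -/
theorem greedy_avoiding_ball_energy_bound {P : ℕ}
    (A : Set (EuclideanSpace ℝ (Fin P))) (hA : IsCompact A)
    (s : ℝ) (hs : 0 < s)
    (w : EuclideanSpace ℝ (Fin P) → EuclideanSpace ℝ (Fin P) → ℝ)
    (hw0 : ∀ x y, 0 ≤ w x y) (hwsym : ∀ x y, w x y = w y x)
    (C : ℝ) (hC : ∀ x ∈ A, ∀ y ∈ A, w x y ≤ C)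
    (a : ℕ → EuclideanSpace ℝ (Fin P)) (ha : ∀ n, a n ∈ A)
    (hgreedy : ∀ n, ∀ x ∈ A,
      ∑ i ∈ Finset.range n, w (a n) (a i) * ‖a n - a i‖ ^ (-s) ≤
        ∑ i ∈ Finset.range n, w x (a i) * ‖x - a i‖ ^ (-s)) :
    (∀ c ∈ A, ∀ ε : ℝ, 0 < ε → (∀ n, a n ∉ Metric.ball c ε) →
      ∀ N : ℕ, 2 ≤ N →
        ∑ i ∈ Finset.range N, ∑ j ∈ Finset.range N,
            (if i = j then 0 else w (a i) (a j) * ‖a i - a j‖ ^ (-s)) ≤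
          (C / ε ^ s) * N * ((N : ℝ) - 1)) ∧
    (Tendsto (fun N : ℕ =>
        (∑ i ∈ Finset.range N, ∑ j ∈ Finset.range N,
          (if i = j then 0 else w (a i) (a j) * ‖a i - a j‖ ^ (-s))) / (N : ℝ) ^ 2)
        atTop atTop →
      A ⊆ closure (Set.range a)) := by
  have hfsym : ∀ i j : ℕ, (if i = j then 0 else w (a i) (a j) * ‖a i - a j‖ ^ (-s))
      = (if j = i then 0 else w (a j) (a i) * ‖a j - a i‖ ^ (-s)) := by
    intro i j
    by_cases h : i = j
    · subst h; simp
    · rw [if_neg h, if_neg (Ne.symm h), hwsym, norm_sub_rev]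
  have main : ∀ c ∈ A, ∀ ε : ℝ, 0 < ε → (∀ n, a n ∉ Metric.ball c ε) →
      ∀ N : ℕ,
        ∑ i ∈ Finset.range N, ∑ j ∈ Finset.range N,
            (if i = j then 0 else w (a i) (a j) * ‖a i - a j‖ ^ (-s)) ≤
          (C / ε ^ s) * N * ((N : ℝ) - 1) := by
    intro c hc ε hε havoid N
    have hC0 : 0 ≤ C := le_trans (hw0 c c) (hC c hc c hc)
    have hεs : (0:ℝ) < ε ^ s := Real.rpow_pos_of_pos hε s
    have hK : 0 ≤ C / ε ^ s := div_nonneg hC0 hεs.le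
    have hrow : ∀ n : ℕ, ∑ i ∈ Finset.range n,
        (if i = n then 0 else w (a i) (a n) * ‖a i - a n‖ ^ (-s)) ≤ (n : ℝ) * (C / ε ^ s) := by
      intro n
      have h1 : ∑ i ∈ Finset.range n,
          (if i = n then 0 else w (a i) (a n) * ‖a i - a n‖ ^ (-s))
          = ∑ i ∈ Finset.range n, w (a n) (a i) * ‖a n - a i‖ ^ (-s) := by
        apply Finset.sum_congr rfl
        intro i hi
        have hin : i ≠ n := (Finset.mem_range.mp hi).ne
        rw [if_neg hin, hwsym, norm_sub_rev]
      rw [h1]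
      calc ∑ i ∈ Finset.range n, w (a n) (a i) * ‖a n - a i‖ ^ (-s)
          ≤ ∑ i ∈ Finset.range n, w c (a i) * ‖c - a i‖ ^ (-s) := hgreedy n c hc
        _ ≤ ∑ _i ∈ Finset.range n, C / ε ^ s := by
            apply Finset.sum_le_sum
            intro i _
            have hdist : ε ≤ ‖c - a i‖ := by
              have := havoid i
              rw [Metric.mem_ball, not_lt] at this
              calc ε ≤ dist (a i) c := this
                _ = ‖c - a i‖ := by rw [dist_comm, dist_eq_norm]
            have hpow : ‖c - a i‖ ^ (-s) ≤ ε ^ (-s) := by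
              rw [Real.rpow_neg (le_trans hε.le hdist), Real.rpow_neg hε.le]
              exact inv_anti₀ hεs (Real.rpow_le_rpow hε.le hdist hs.le)
            have hpow' : ε ^ (-s) = (ε ^ s)⁻¹ := Real.rpow_neg hε.le s
            calc w c (a i) * ‖c - a i‖ ^ (-s)
                ≤ C * ε ^ (-s) := by
                  apply mul_le_mul (hC c hc (a i) (ha i)) hpow
                    (Real.rpow_nonneg (norm_nonneg _) _) hC0
              _ = C / ε ^ s := by rw [hpow', div_eq_mul_inv]
        _ = (n : ℝ) * (C / ε ^ s) := by
            rw [Finset.sum_const, Finset.card_range, nsmul_eq_mul]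
    induction N with
    | zero => simp
    | succ N ih =>
      have expand : (∑ i ∈ Finset.range (N+1), ∑ j ∈ Finset.range (N+1),
            (if i = j then 0 else w (a i) (a j) * ‖a i - a j‖ ^ (-s)))
          = (∑ i ∈ Finset.range N, ∑ j ∈ Finset.range N,
              (if i = j then 0 else w (a i) (a j) * ‖a i - a j‖ ^ (-s)))
            + 2 * ∑ i ∈ Finset.range N,
              (if i = N then 0 else w (a i) (a N) * ‖a i - a N‖ ^ (-s)) := by
        rw [Finset.sum_range_succ]
        simp only [Finset.sum_range_succ]
        rw [Finset.sum_add_distrib]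
        have h2 : ∑ j ∈ Finset.range N,
            (if N = j then 0 else w (a N) (a j) * ‖a N - a j‖ ^ (-s))
            = ∑ j ∈ Finset.range N,
              (if j = N then 0 else w (a j) (a N) * ‖a j - a N‖ ^ (-s)) := by
          exact Finset.sum_congr rfl fun j _ => (hfsym j N).symm
        rw [h2]
        simp only [if_true]
        ring
      rw [expand]
      have h2' : 2 * ∑ i ∈ Finset.range N,
          (if i = N then 0 else w (a i) (a N) * ‖a i - a N‖ ^ (-s))
          ≤ 2 * ((N : ℝ) * (C / ε ^ s)) := by
        have := hrow N
        linarith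
      have hrhs : (C / ε ^ s) * N * ((N : ℝ) - 1) + 2 * ((N : ℝ) * (C / ε ^ s))
          = (C / ε ^ s) * (N + 1 : ℕ) * (((N : ℕ) + 1 : ℝ) - 1) := by
        push_cast
        ring
      calc _ ≤ (C / ε ^ s) * N * ((N : ℝ) - 1) + 2 * ((N : ℝ) * (C / ε ^ s)) := by
            exact add_le_add ih h2'
        _ = _ := by push_cast; ring
  constructor
  · intro c hc ε hε havoid N _
    exact main c hc ε hε havoid N
  · intro hT c hc
    by_contra hcl
    rw [Metric.mem_closure_iff] at hcl
    push_neg at hcl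
    obtain ⟨ε, hε, hfar⟩ := hcl
    have havoid : ∀ n, a n ∉ Metric.ball c ε := by
      intro n hn
      rw [Metric.mem_ball] at hn
      have := hfar (a n) ⟨n, rfl⟩
      rw [dist_comm] at this
      linarith
    have hC0 : 0 ≤ C := le_trans (hw0 c c) (hC c hc c hc)
    have hεs : (0:ℝ) < ε ^ s := Real.rpow_pos_of_pos hε s
    have hK : 0 ≤ C / ε ^ s := div_nonneg hC0 hεs.le
    obtain ⟨N, hN1, hN2⟩ := ((hT.eventually_gt_atTop (C / ε ^ s)).and
      (eventually_ge_atTop 1)).exists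
    have hNpos : (0:ℝ) < (N : ℝ) ^ 2 := by
      have : (1:ℝ) ≤ (N : ℝ) := by exact_mod_cast hN2
      positivity
    have hb := main c hc ε hε havoid N
    have hN1' : (1:ℝ) ≤ (N : ℝ) := by exact_mod_cast hN2
    have hle : (∑ i ∈ Finset.range N, ∑ j ∈ Finset.range N,
        (if i = j then 0 else w (a i) (a j) * ‖a i - a j‖ ^ (-s))) / (N : ℝ) ^ 2
        ≤ C / ε ^ s := by
      rw [div_le_iff₀ hNpos]
      nlinarith [hb, hK, hN1']
    linarith [hN1, hle]
end

section
/- lim_{n→∞} [ (1/9)·( (E₁ⁿ - (1/π)2^{2n} n log 2)/2^{2n} + 16·((1/2)E₁^{n+2} - (1/π)Λ_n)/2^{2(n+2)} ) ] = (1/π)(γ - log(π/2) + log(2^{16/9}/3)), where Λ_n = (3·2^n)² log(3·2^n) - 2^{2n} log(2^n), assuming (E₁^m - (1/π)2^{2m} log(2^m))/2^{2m} → (1/π)(γ - log(π/2)) as m → ∞. -/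
open Filter Real

/-- Second-order energy asymptotics for greedy `k₁`-energy configurations of `3·2^n`
points on `S¹`: writing `E m` for the minimal Riesz 1-energy of `2^m` points on the
unit circle, and assuming the known asymptotics
`(E m - (1/π)·2^(2m)·log(2^m))/2^(2m) → (1/π)(γ - log(π/2))`, one has, with
`Λ n = (3·2^n)²·log(3·2^n) - 2^(2n)·log(2^n)`,
`(1/9)·((E n - (1/π)·2^(2n)·n·log 2)/2^(2n) + 16·((1/2)·E (n+2) - (1/π)·Λ n)/2^(2(n+2)))`
converging to `(1/π)(γ - log(π/2) + log(2^(16/9)/3))`. -/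
theorem greedy_second_order_asymptotics (E : ℕ → ℝ)
    (hE : Tendsto (fun m : ℕ =>
        (E m - (1 / Real.pi) * 2 ^ (2 * m) * Real.log (2 ^ m)) / 2 ^ (2 * m))
      atTop (nhds ((1 / Real.pi) * (Real.eulerMascheroniConstant - Real.log (Real.pi / 2))))) :
    Tendsto (fun n : ℕ =>
        (1 / 9) * ((E n - (1 / Real.pi) * 2 ^ (2 * n) * (n * Real.log 2)) / 2 ^ (2 * n) +
          16 * ((1 / 2) * E (n + 2) -
              (1 / Real.pi) * (((3 * 2 ^ n : ℝ)) ^ 2 * Real.log ((3 * 2 ^ n : ℝ)) -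
                2 ^ (2 * n) * Real.log (2 ^ n))) / 2 ^ (2 * (n + 2))))
      atTop
      (nhds ((1 / Real.pi) * (Real.eulerMascheroniConstant - Real.log (Real.pi / 2) +
        Real.log ((2 : ℝ) ^ ((16 : ℝ) / 9) / 3)))) := by
  set a : ℕ → ℝ := fun m =>
    (E m - (1 / Real.pi) * 2 ^ (2 * m) * Real.log (2 ^ m)) / 2 ^ (2 * m) with ha
  set L : ℝ := (1 / Real.pi) * (Real.eulerMascheroniConstant - Real.log (Real.pi / 2)) with hL
  set C : ℝ := (1 / Real.pi) * ((16 / 9) * Real.log 2 - Real.log 3) with hC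
  have h2 : Tendsto (fun n : ℕ => a (n + 2)) atTop (nhds L) :=
    hE.comp (tendsto_add_atTop_nat 2)
  have key : Tendsto (fun n : ℕ => (1 / 9) * a n + (8 / 9) * a (n + 2) + C) atTop
      (nhds ((1 / 9) * L + (8 / 9) * L + C)) :=
    ((hE.const_mul (1 / 9)).add (h2.const_mul (8 / 9))).add tendsto_const_nhds
  have hconst : (1 / 9 : ℝ) * L + (8 / 9) * L + C =
      (1 / Real.pi) * (Real.eulerMascheroniConstant - Real.log (Real.pi / 2) +
        Real.log ((2 : ℝ) ^ ((16 : ℝ) / 9) / 3)) := by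
    have : Real.log ((2 : ℝ) ^ ((16 : ℝ) / 9) / 3) = (16 / 9) * Real.log 2 - Real.log 3 := by
      rw [Real.log_div (by positivity) (by norm_num),
        Real.log_rpow (by norm_num : (0:ℝ) < 2)]
    rw [hL, hC, this]; ring
  rw [← hconst]
  convert key using 2 with n
  have hp : (2 : ℝ) ^ (2 * n) ≠ 0 := by positivity
  have hq : (2 : ℝ) ^ (2 * (n + 2)) ≠ 0 := by positivity
  simp only [ha]
  rw [Real.log_mul (by norm_num) (by positivity), Real.log_pow, Real.log_pow]
  have hpow : (2 : ℝ) ^ (2 * (n + 2)) = 2 ^ (2 * n) * 16 := by ring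
  rw [hpow] at hq ⊢
  have hπ : Real.pi ≠ 0 := Real.pi_ne_zero
  rw [hC]
  field_simp
  push_cast
  ring
end
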